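/- arXiv:1206.4731 — 2 statements merged into one kernel-verified Lean document; each statement's English description precedes it below -/
import Mathlib

section
/- Let (s_1, …, s_n) be a fan ordering of a fan in a matroid M. Then λ_M({s_1, …, s_n}) ≤ 2. -/
open scoped Matroid

universe u v

namespace Matroid

variable {α : Type u} {β : Type v}

/-- Deletion of a set of elements from a matroid. -/
def Del (M : Matroid α) (D : Set α) : Matroid α := M ↾ (M.E \ D)

/-- Contraction of a set of elements in a matroid. -/
def Con (M : Matroid α) (C : Set α) : Matroid α := (M✶.Del C)✶

/-- A circuit is a minimal dependent set. -/
def IsCircuit' (M : Matroid α) (C : Set α) : Prop :=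
  M.Dep C ∧ ∀ ⦃D : Set α⦄, D ⊂ C → M.Indep D

/-- A cocircuit is a circuit of the dual matroid. -/
def IsCocircuit' (M : Matroid α) (C : Set α) : Prop := M✶.IsCircuit' C

/-- A triangle is a 3-element circuit. -/
def IsTriangle (M : Matroid α) (T : Set α) : Prop := M.IsCircuit' T ∧ T.encard = 3

/-- A triad is a 3-element cocircuit. -/
def IsTriad (M : Matroid α) (T : Set α) : Prop := M.IsCocircuit' T ∧ T.encard = 3

/-- A quad is a 4-element set that is both a circuit and a cocircuit. -/
def IsQuad (M : Matroid α) (Q : Set α) : Prop :=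
  M.IsCircuit' Q ∧ M.IsCocircuit' Q ∧ Q.encard = 4

/-- The rank (in `ℕ∞`) of a set in a matroid: the supremum of the cardinalities
of independent subsets of the set. -/
noncomputable def eRk' (M : Matroid α) (X : Set α) : ℕ∞ :=
  ⨆ I ∈ {I : Set α | M.Indep I ∧ I ⊆ X}, I.encard

/-- `M.ConnBddBy X k` says that the connectivity `λ_M(X) = r(X) + r(E − X) − r(M)`
is at most `k`, phrased without subtraction. -/
def ConnBddBy (M : Matroid α) (X : Set α) (k : ℕ) : Prop :=
  M.eRk' X + M.eRk' (M.E \ X) ≤ M.eRk' M.E + (k : ℕ∞)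

/-- `(X, Y)` is a `k`-separation of `M`: a partition of the ground set with both
sides of size at least `k` and `λ_M(X) ≤ k − 1`. -/
def IsKSep (M : Matroid α) (k : ℕ) (X Y : Set α) : Prop :=
  Disjoint X Y ∧ X ∪ Y = M.E ∧ (k : ℕ∞) ≤ X.encard ∧ (k : ℕ∞) ≤ Y.encard ∧
    M.ConnBddBy X (k - 1)

/-- A matroid is `n`-connected if it has no `k`-separation for any `k < n`. -/
def NConnected (M : Matroid α) (n : ℕ) : Prop :=
  ∀ k : ℕ, 0 < k → k < n → ∀ X Y : Set α, ¬ M.IsKSep k X Y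

/-- A matroid is 3-connected if it has no 1- or 2-separation. -/
def ThreeConnected (M : Matroid α) : Prop := M.NConnected 3

/-- A matroid is 4-connected if it has no 1-, 2- or 3-separation. -/
def FourConnected (M : Matroid α) : Prop := M.NConnected 4

/-- A matroid is `(4, k)`-connected if it is 3-connected and every 3-separation
has a side with at most `k` elements. -/
def FourKConnected (M : Matroid α) (k : ℕ) : Prop :=
  M.ThreeConnected ∧ ∀ X Y : Set α, M.IsKSep 3 X Y →
    X.encard ≤ (k : ℕ∞) ∨ Y.encard ≤ (k : ℕ∞)

/-- A matroid is internally 4-connected if it is (4, 3)-connected. -/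
def InternallyFourConnected (M : Matroid α) : Prop := M.FourKConnected 3

/-- A `(4, 3)`-violator is a 3-separation with both sides of size at least 4. -/
def Violator43 (M : Matroid α) (X Y : Set α) : Prop :=
  M.IsKSep 3 X Y ∧ (4 : ℕ∞) ≤ X.encard ∧ (4 : ℕ∞) ≤ Y.encard

/-- Two matroids are isomorphic if there is a bijection between their ground sets
carrying independent sets to independent sets in both directions. -/
def IsIsoTo (M : Matroid α) (N : Matroid β) : Prop :=
  ∃ e : M.E ≃ N.E, ∀ I : Set M.E,
    M.Indep (Subtype.val '' I) ↔ N.Indep (Subtype.val '' (e '' I))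

/-- `N` is a minor of `M` if it is obtained from `M` by contracting a set and
deleting a disjoint set. -/
def IsMinorOf (N M : Matroid α) : Prop :=
  ∃ C D : Set α, Disjoint C D ∧ C ⊆ M.E ∧ D ⊆ M.E ∧ N = (M.Con C).Del D

/-- `M` has an `N`-minor: a minor of `M` isomorphic to `N`. -/
def HasIsoMinor (M : Matroid α) (N : Matroid β) : Prop :=
  ∃ M₀ : Matroid α, M₀.IsMinorOf M ∧ M₀.IsIsoTo N

/-- `M` has a proper `N`-minor: a proper minor of `M` isomorphic to `N`. -/
def HasProperIsoMinor (M : Matroid α) (N : Matroid β) : Prop :=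
  ∃ M₀ : Matroid α, M₀.IsMinorOf M ∧ M₀ ≠ M ∧ M₀.IsIsoTo N

/-- A matroid is binary if it is representable over `GF(2)`. -/
def IsBinary (M : Matroid α) : Prop :=
  ∃ (ι : Type u) (v : α → ι → ZMod 2), ∀ I : Set α,
    M.Indep I ↔ I ⊆ M.E ∧ LinearIndependent (ZMod 2) (fun x : I => v x)

/-- A 4-fan: an ordering `(a, b, c, d)` of a 4-element set with `{a,b,c}` a
triangle and `{b,c,d}` a triad. -/
def Is4FanOrdering (M : Matroid α) (a b c d : α) : Prop :=
  ({a, b, c, d} : Set α).encard = 4 ∧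
    M.IsTriangle {a, b, c} ∧ M.IsTriad {b, c, d}

/-- A 5-fan: an ordering of a 5-element set whose alternating sequence contains
two triangles. -/
def Is5FanOrdering (M : Matroid α) (a b c d e : α) : Prop :=
  ({a, b, c, d, e} : Set α).encard = 5 ∧
    M.IsTriangle {a, b, c} ∧ M.IsTriad {b, c, d} ∧ M.IsTriangle {c, d, e}

/-- A 5-cofan: an ordering of a 5-element set whose alternating sequence contains
two triads. -/
def Is5CofanOrdering (M : Matroid α) (a b c d e : α) : Prop :=
  ({a, b, c, d, e} : Set α).encard = 5 ∧
    M.IsTriad {a, b, c} ∧ M.IsTriangle {b, c, d} ∧ M.IsTriad {c, d, e}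

/-- A fan ordering `(s 0, …, s (n-1))`: the consecutive triples form an
alternating sequence of triangles and triads. -/
def IsFanOrdering (M : Matroid α) (n : ℕ) (s : ℕ → α) : Prop :=
  3 ≤ n ∧ Set.InjOn s (Set.Iio n) ∧
    ((∀ i : ℕ, i + 3 ≤ n →
        (Even i → M.IsTriangle {s i, s (i + 1), s (i + 2)}) ∧
        (¬ Even i → M.IsTriad {s i, s (i + 1), s (i + 2)})) ∨
     (∀ i : ℕ, i + 3 ≤ n →
        (Even i → M.IsTriad {s i, s (i + 1), s (i + 2)}) ∧
        (¬ Even i → M.IsTriangle {s i, s (i + 1), s (i + 2)})))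

/-- The counterexample hypotheses on a pair `(M, N)`. -/
def CexHyp (M : Matroid α) (N : Matroid β) : Prop :=
  M.IsBinary ∧ N.IsBinary ∧
  M.InternallyFourConnected ∧ N.InternallyFourConnected ∧
  M.HasProperIsoMinor N ∧
  (8 : ℕ∞) ≤ N.E.encard ∧ (11 : ℕ∞) ≤ M.E.encard ∧
  (∀ T : Set α, M.IsTriangle T → ∀ e ∈ T, ¬ (M.Del {e}).HasIsoMinor N) ∧
  (∀ T : Set α, M.IsTriad T → ∀ e ∈ T, ¬ (M.Con {e}).HasIsoMinor N) ∧
  ¬ ∃ M' : Matroid α, M'.IsMinorOf M ∧ M'.InternallyFourConnected ∧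
      M'.HasIsoMinor N ∧
      M'.E.encard + 1 ≤ M.E.encard ∧ M.E.encard ≤ M'.E.encard + 2

end Matroid

namespace Matroid

variable {α : Type u} {M : Matroid α} {X Y Z I J C S : Set α} {t : α}

lemma le_eRk_of (hI : M.Indep I) (hIX : I ⊆ X) : I.encard ≤ M.eRk' X :=
  le_iSup_of_le I (le_iSup_of_le ⟨hI, hIX⟩ le_rfl)

lemma eRk'_le (c : ℕ∞) (h : ∀ I, M.Indep I → I ⊆ X → I.encard ≤ c) : M.eRk' X ≤ c :=
  iSup₂_le fun I hI => h I hI.1 hI.2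

lemma eRk'_mono (h : X ⊆ Y) : M.eRk' X ≤ M.eRk' Y :=
  eRk'_le _ fun _ hI hIX => le_eRk_of hI (hIX.trans h)

lemma encard_le_of_indep_subset_closure (hI : M.Indep I) (hJ : M.Indep J)
    (h : I ⊆ M.closure J) : I.encard ≤ J.encard := by
  by_contra h'
  push_neg at h'
  obtain ⟨e, he, hins⟩ := hJ.augment hI h'
  have hdep : M.Dep (insert e J) := hJ.insert_dep_iff.mpr ⟨h he.1, he.2⟩
  exact hdep.not_indep hins

lemma eRk'_le_encard_of_subset_closure (hS : S ⊆ M.E) (h : X ⊆ M.closure S) :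
    M.eRk' X ≤ S.encard := by
  obtain ⟨J, hJ⟩ := M.exists_isBasis S hS
  refine eRk'_le _ fun I hI hIX => ?_
  have hIcl : I ⊆ M.closure J := by
    rw [hJ.closure_eq_closure]; exact hIX.trans h
  exact (encard_le_of_indep_subset_closure hI hJ.indep hIcl).trans
    (Set.encard_le_encard hJ.subset)

lemma eRk'_basis (hZ : Z ⊆ M.E) (hI : M.IsBasis I Z) : M.eRk' Z = I.encard := by
  refine le_antisymm ?_ (le_eRk_of hI.indep hI.subset)
  refine eRk'_le _ fun J hJ hJZ => ?_
  exact encard_le_of_indep_subset_closure hJ hI.indep (hJZ.trans hI.subset_closure)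

lemma eRk'_insert_of_not_mem_closure (hZ : Z ⊆ M.E) (ht : t ∈ M.E)
    (h : t ∉ M.closure Z) : M.eRk' Z + 1 ≤ M.eRk' (insert t Z) := by
  obtain ⟨I, hI⟩ := M.exists_isBasis Z hZ
  have htI : t ∉ M.closure I := by rwa [hI.closure_eq_closure]
  have htI' : t ∉ I := fun hmem => htI (M.subset_closure I hI.indep.subset_ground hmem)
  have hins : M.Indep (insert t I) :=
    (hI.indep.insert_indep_iff_of_notMem htI').mpr ⟨ht, htI⟩
  have hle : (insert t I).encard ≤ M.eRk' (insert t Z) :=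
    le_eRk_of hins (Set.insert_subset_insert hI.subset)
  rw [Set.encard_insert_of_notMem htI'] at hle
  rwa [eRk'_basis hZ hI]

lemma IsCocircuit'.subset_ground (hC : M.IsCocircuit' C) : C ⊆ M.E := by
  have h := hC.1.subset_ground
  rwa [dual_ground] at h

lemma not_mem_closure_of_cocircuit (hC : M.IsCocircuit' C) (hZ : Z ⊆ M.E)
    (hdj : Disjoint Z C) (ht : t ∈ C) : t ∉ M.closure Z := by
  obtain ⟨hdep, hmin⟩ := hC
  have hCE : C ⊆ M.E := by have := hdep.subset_ground; rwa [dual_ground] at this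
  intro htcl
  have hss : C \ {t} ⊂ C := Set.sdiff_singleton_ssubset.mpr ht
  obtain ⟨-, B, hB, hdisj⟩ := dual_indep_iff_exists'.mp (hmin hss)
  have hBt : B \ {t} ⊆ M.E \ C := by
    rintro b ⟨hbB, hbt⟩
    refine ⟨hB.subset_ground hbB, fun hbC => ?_⟩
    exact hdisj.ne_of_mem ⟨hbC, hbt⟩ hbB rfl
  obtain ⟨I, hI, hBI⟩ := (hB.indep.subset Set.diff_subset).subset_isBasis_of_subset hBt
    Set.diff_subset
  have htclI : t ∈ M.closure I := by
    rw [hI.closure_eq_closure]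
    have hZsub : Z ⊆ M.E \ C := fun z hz => ⟨hZ hz, Set.disjoint_left.mp hdj hz⟩
    exact M.closure_subset_closure hZsub htcl
  have hBsub : B ⊆ insert t I := by
    intro b hb
    rcases eq_or_ne b t with rfl | hne
    · exact Set.mem_insert _ _
    · exact Set.mem_insert_of_mem _ (hBI ⟨hb, hne⟩)
  have hspan : M.E ⊆ M.closure I := by
    rw [← closure_insert_eq_of_mem_closure htclI, ← hB.closure_eq]
    exact M.closure_subset_closure hBsub
  have hIbase : M.IsBase I := hI.indep.isBase_of_ground_subset_closure hspan
  have : M✶.Indep C := dual_indep_iff_exists'.mpr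
    ⟨hCE, I, hIbase, Set.disjoint_left.mpr fun c hcC hcI => (hI.subset hcI).2 hcC⟩
  exact hdep.not_indep this

lemma IsCircuit'.mem_closure_diff (hC : M.IsCircuit' C) (ht : t ∈ C) :
    t ∈ M.closure (C \ {t}) := by
  have hind : M.Indep (C \ {t}) := hC.2 (Set.sdiff_singleton_ssubset.mpr ht)
  have heq : insert t (C \ {t}) = C := by
    rw [Set.insert_diff_singleton, Set.insert_eq_self.mpr ht]
  have := hind.insert_dep_iff (e := t)
  rw [heq] at this
  exact (this.mp hC.1).1

lemma chain_lemma (M : Matroid α) (t : ℕ → α) (Y : Set α) (hY : Y ⊆ M.E) (m : ℕ)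
    (h : ∀ k, k < m → ∃ C, M.IsCocircuit' C ∧ t k ∈ C ∧ Disjoint Y C ∧
      ∀ j, j < k → t j ∉ C) :
    M.eRk' Y + m ≤ M.eRk' (Y ∪ t '' Set.Iio m) := by
  induction m with
  | zero =>
    rw [show Set.Iio 0 = (∅ : Set ℕ) from by ext x; simp]
    simp
  | succ m ih =>
    obtain ⟨C, hC, htm, hYC, hprev⟩ := h m (Nat.lt_succ_self m)
    have htE : ∀ j, j < m + 1 → t j ∈ M.E := by
      intro j hj
      obtain ⟨C', hC', htj, -, -⟩ := h j hj
      exact hC'.subset_ground htj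
    set Z := Y ∪ t '' Set.Iio m with hZdef
    have hZE : Z ⊆ M.E := by
      rw [hZdef]
      rintro z (hz | ⟨j, hj, rfl⟩)
      · exact hY hz
      · exact htE j (Nat.lt_succ_of_lt hj)
    have hdisj : Disjoint Z C := by
      rw [Set.disjoint_union_left]
      refine ⟨hYC, Set.disjoint_left.mpr ?_⟩
      rintro _ ⟨j, hj, rfl⟩
      exact hprev j hj
    have hncl : t m ∉ M.closure Z :=
      not_mem_closure_of_cocircuit hC hZE hdisj htm
    have hstep := eRk'_insert_of_not_mem_closure hZE (hC.subset_ground htm) hncl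
    have hins : insert (t m) Z = Y ∪ t '' Set.Iio (m + 1) := by
      have hIio : Set.Iio (m + 1) = insert m (Set.Iio m) := by
        ext x; simp only [Set.mem_Iio, Set.mem_insert_iff]; omega
      rw [hIio, Set.image_insert_eq, hZdef, Set.union_insert]
    have ihle := ih fun k hk => h k (Nat.lt_succ_of_lt hk)
    calc M.eRk' Y + (m + 1 : ℕ) = (M.eRk' Y + m) + 1 := by push_cast; ring
    _ ≤ M.eRk' Z + 1 := add_le_add_left ihle 1
    _ ≤ M.eRk' (insert (t m) Z) := hstep
    _ = M.eRk' (Y ∪ t '' Set.Iio (m + 1)) := by rw [hins]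

lemma main_aux (M : Matroid α) (n : ℕ) (s : ℕ → α) (hn : 3 ≤ n)
    (hinj : Set.InjOn s (Set.Iio n)) (p q : ℕ) (hp : p ≤ 1) (hq : q ≤ 1)
    (hq2 : (n + 1 + p + q) % 2 = 0)
    (htri : ∀ i, i + 3 ≤ n → i % 2 ≠ p → M.IsTriangle {s i, s (i+1), s (i+2)})
    (htriad : ∀ i, i + 3 ≤ n → i % 2 = p → M.IsTriad {s i, s (i+1), s (i+2)})
    (g : ℕ → ℕ)
    (hgn : ∀ k, k < (n-1-q)/2 + 2 → g k < n)
    (hcov : ∀ i, i < n → (i % 2 ≠ p ∨ i = 0 ∨ i = n-1) →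
      ∃ k, k < (n-1-q)/2 + 2 ∧ g k = i) :
    M.ConnBddBy (s '' Set.Iio n) 2 := by
  set m := (n-1-q)/2 with hm
  set X := s '' Set.Iio n with hXdef
  -- every triple is in the ground set
  have htrip : ∀ i, i + 3 ≤ n → ({s i, s (i+1), s (i+2)} : Set α) ⊆ M.E := by
    intro i hi
    by_cases hip : i % 2 = p
    · exact (htriad i hi hip).1.subset_ground
    · exact (htri i hi hip).1.1.subset_ground
  have hsE : ∀ j, j < n → s j ∈ M.E := by
    intro j hj
    rcases le_or_gt (j + 3) n with h | h
    · exact htrip j h (by simp)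
    · have h3 : (n - 3) + 3 ≤ n := by omega
      have hsub := htrip (n - 3) h3
      rcases (by omega : j = n - 3 ∨ j = (n - 3) + 1 ∨ j = (n - 3) + 2) with rfl | rfl | rfl
      · exact hsub (by simp)
      · exact hsub (by simp)
      · exact hsub (by simp)
  have hXE : X ⊆ M.E := by rintro _ ⟨j, hj, rfl⟩; exact hsE j hj
  -- the spanning set
  set SS := s '' (g '' Set.Iio (m + 2)) with hSSdef
  have hSSX : SS ⊆ X := by
    rintro _ ⟨i, ⟨k, hk, rfl⟩, rfl⟩
    exact ⟨g k, hgn k hk, rfl⟩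
  have hSSE : SS ⊆ M.E := hSSX.trans hXE
  have hmemSS : ∀ i, i < n → (i % 2 ≠ p ∨ i = 0 ∨ i = n-1) → s i ∈ SS := by
    intro i hi hcond
    obtain ⟨k, hk, hgk⟩ := hcov i hi hcond
    exact ⟨g k, ⟨k, hk, rfl⟩, by rw [hgk]⟩
  have hXcl : X ⊆ M.closure SS := by
    rintro _ ⟨j, hj, rfl⟩
    simp only [Set.mem_Iio] at hj
    by_cases hcase : j % 2 ≠ p ∨ j = 0 ∨ j = n - 1
    · exact M.subset_closure SS hSSE (hmemSS j hj hcase)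
    · push_neg at hcase
      obtain ⟨hjp, hj0, hjn⟩ := hcase
      obtain ⟨i, rfl⟩ : ∃ i, j = i + 1 := ⟨j - 1, by omega⟩
      have hi3 : i + 3 ≤ n := by omega
      have htr := htri i hi3 (by omega)
      have hmem := htr.1.mem_closure_diff (t := s (i+1)) (by simp)
      refine M.closure_subset_closure ?_ hmem
      rintro x ⟨hx, hxne⟩
      simp only [Set.mem_singleton_iff] at hxne
      rcases hx with rfl | rfl | rfl
      · exact hmemSS i (by omega) (Or.inl (by omega))
      · exact absurd rfl hxne
      · exact hmemSS (i+2) (by omega) (Or.inl (by omega))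
  -- rank bound on X
  have hrkX : M.eRk' X ≤ (m + 2 : ℕ) := by
    refine (eRk'_le_encard_of_subset_closure hSSE hXcl).trans ?_
    calc SS.encard ≤ (g '' Set.Iio (m+2)).encard := Set.encard_image_le _ _
    _ ≤ (Set.Iio (m+2)).encard := Set.encard_image_le _ _
    _ = ((m+2 : ℕ) : ℕ∞) := by
        rw [← Finset.coe_range, Set.encard_coe_eq_coe_finsetCard, Finset.card_range]
  -- the chain
  set Y := M.E \ X with hYdef
  set tt : ℕ → α := fun k => s (n - 1 - q - 2*k) with htt
  have hchain : ∀ k, k < m → ∃ C, M.IsCocircuit' C ∧ tt k ∈ C ∧ Disjoint Y C ∧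
      ∀ j, j < k → tt j ∉ C := by
    intro k hk
    have hk' : 2 * k + 3 + q ≤ n := by omega
    obtain ⟨i, hi3, hip, hieq⟩ : ∃ i, i + 3 ≤ n ∧ i % 2 = p ∧ n - 1 - q - 2*k = i + 2 :=
      ⟨n - 3 - q - 2*k, by omega, by omega, by omega⟩
    have hC := htriad i hi3 hip
    have hCX : ({s i, s (i+1), s (i+2)} : Set α) ⊆ X := by
      rintro x (rfl | rfl | rfl)
      · exact ⟨i, Set.mem_Iio.mpr (by omega), rfl⟩
      · exact ⟨i+1, Set.mem_Iio.mpr (by omega), rfl⟩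
      · exact ⟨i+2, Set.mem_Iio.mpr (by omega), rfl⟩
    refine ⟨_, hC.1, ?_, ?_, ?_⟩
    · show s (n - 1 - q - 2*k) ∈ _
      rw [hieq]; simp
    · exact Set.disjoint_sdiff_left.mono_right hCX
    · intro j hj hmem
      have hjlt : n - 1 - q - 2*j < n := by omega
      rcases hmem with h | h | h
      · have := hinj hjlt (by omega : i < n) h; omega
      · have := hinj hjlt (by omega : i + 1 < n) h; omega
      · have := hinj hjlt (by omega : i + 2 < n) h; omega
  have hYE : Y ⊆ M.E := Set.diff_subset
  have hchain2 := chain_lemma M tt Y hYE m hchain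
  have hYt : Y ∪ tt '' Set.Iio m ⊆ M.E := by
    rintro z (hz | ⟨j, hj, rfl⟩)
    · exact hYE hz
    · exact hsE _ (by simp only [Set.mem_Iio] at hj; omega)
  have h2 : M.eRk' Y + m ≤ M.eRk' M.E := hchain2.trans (eRk'_mono hYt)
  show M.eRk' X + M.eRk' (M.E \ X) ≤ M.eRk' M.E + (2 : ℕ)
  calc M.eRk' X + M.eRk' (M.E \ X) ≤ ((m + 2 : ℕ) : ℕ∞) + M.eRk' Y :=
        add_le_add_left hrkX _
  _ = (M.eRk' Y + m) + 2 := by push_cast; ring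
  _ ≤ M.eRk' M.E + 2 := add_le_add_left h2 2
  _ = M.eRk' M.E + ((2:ℕ) : ℕ∞) := by norm_num

end Matroid


open Matroid

/-- the set of elements of a fan is 3-separating, that is,
`λ_M({s_1, …, s_n}) ≤ 2`. -/
theorem statement_2 {α : Type u} (M : Matroid α) (n : ℕ) (s : ℕ → α)
    (hfan : M.IsFanOrdering n s) :
    M.ConnBddBy (s '' Set.Iio n) 2 := by
  obtain ⟨hn, hinj, hcase⟩ := hfan
  rcases hcase with h | h
  · -- triangles at even positions: p = 1
    refine Matroid.main_aux M n s hn hinj 1 (n % 2) le_rfl (by omega) (by omega)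
      (fun i hi hip => (h i hi).1 (Nat.even_iff.mpr (by omega)))
      (fun i hi hip => (h i hi).2 (by rw [Nat.even_iff]; omega))
      (fun k => if 2*k < n then 2*k else n - 1)
      (fun k hk => by show (if 2*k < n then 2*k else n - 1) < n; split_ifs <;> first | omega | exact (‹False›).elim)
      ?_
    intro i hi hcond
    rcases Nat.mod_two_eq_zero_or_one i with he | ho
    · refine ⟨i / 2, by omega, ?_⟩
      show (if 2*(i/2) < n then 2*(i/2) else n - 1) = i
      split_ifs <;> first | omega | exact (‹False›).elim
    · have hi' : i = n - 1 := by rcases hcond with h' | h' | h' <;> omega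
      refine ⟨(n-1-n%2)/2 + 1, by omega, ?_⟩
      show (if 2*((n-1-n%2)/2 + 1) < n then 2*((n-1-n%2)/2 + 1) else n - 1) = i
      split_ifs <;> first | omega | exact (‹False›).elim
  · -- triads at even positions: p = 0
    refine Matroid.main_aux M n s hn hinj 0 ((n+1) % 2) (by omega) (by omega) (by omega)
      (fun i hi hip => (h i hi).2 (by rw [Nat.even_iff]; omega))
      (fun i hi hip => (h i hi).1 (Nat.even_iff.mpr (by omega)))
      (fun k => if k = 0 then 0 else if 2*k - 1 < n then 2*k - 1 else n - 1)
      (fun k hk => by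
        show (if k = 0 then 0 else if 2*k - 1 < n then 2*k - 1 else n - 1) < n
        split_ifs <;> first | omega | exact (‹False›).elim)
      ?_
    intro i hi hcond
    rcases Nat.mod_two_eq_zero_or_one i with he | ho
    · have hi' : i = 0 ∨ i = n - 1 := by rcases hcond with h' | h' | h' <;> omega
      rcases hi' with rfl | hi'
      · exact ⟨0, by omega, by simp⟩
      · refine ⟨(n-1)/2 + 1, by omega, ?_⟩
        show (if (n-1)/2 + 1 = 0 then 0 else if 2*((n-1)/2+1) - 1 < n
          then 2*((n-1)/2+1) - 1 else n - 1) = i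
        split_ifs <;> first | omega | exact (‹False›).elim
    · refine ⟨(i+1)/2, by omega, ?_⟩
      show (if (i+1)/2 = 0 then 0 else if 2*((i+1)/2) - 1 < n
        then 2*((i+1)/2) - 1 else n - 1) = i
      split_ifs <;> first | omega | exact (‹False›).elim
end

section
/- Let M be a binary matroid that has an internally 4-connected minor N satisfying |E(N)| ≥ 8. If (s_1, s_2, s_3, s_4) is a 4-fan of M, then M\s_1 or M/s_4 has an N-minor. If (s_1, s_2, s_3, s_4, s_5) is a 5-fan of M, then either M\s_1\s_5 has an N-minor, or both M\s_1/s_2 and M/s_4\s_5 have N-minors; in particular, both M\s_1 and M\s_5 have N-minors. -/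
open scoped Matroid

universe u v

namespace Matroid

variable {α : Type u} {β : Type v}

section PartA

variable {M M₀ M₁ M₂ M₃ : Matroid α} {C D I J X Y B T : Set α} {b c x y : α}

@[simp] lemma Del_ground (M : Matroid α) (D : Set α) : (M.Del D).E = M.E \ D := rfl

lemma Del_indep_iff : (M.Del D).Indep I ↔ M.Indep I ∧ Disjoint I D := by
  unfold Del
  rw [restrict_indep_iff, Set.subset_diff]
  exact ⟨fun h => ⟨h.1, h.2.2⟩, fun h => ⟨h.1, h.1.subset_ground, h.2⟩⟩

lemma Indep.del (h : M.Indep I) (hdj : Disjoint I D) : (M.Del D).Indep I :=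
  Del_indep_iff.2 ⟨h, hdj⟩

lemma Indep.of_del (h : (M.Del D).Indep I) : M.Indep I := (Del_indep_iff.1 h).1

lemma Dep.del (h : M.Dep X) (hdj : Disjoint X D) : (M.Del D).Dep X :=
  ⟨fun hi => h.not_indep hi.of_del, Set.subset_diff.2 ⟨h.subset_ground, hdj⟩⟩

lemma Del_dual (M : Matroid α) (D : Set α) : (M.Del D)✶ = M✶.Con D := by
  rw [Con, dual_dual]

lemma Con_dual (M : Matroid α) (C : Set α) : (M.Con C)✶ = M✶.Del C := by
  rw [Con, dual_dual]

@[simp] lemma Con_ground (M : Matroid α) (C : Set α) : (M.Con C).E = M.E \ C := by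
  rw [Con]; simp [Del]

lemma Del_inter_ground (M : Matroid α) (D : Set α) : M.Del (D ∩ M.E) = M.Del D := by
  unfold Del; rw [Set.diff_inter_self_eq_diff]

lemma Con_inter_ground (M : Matroid α) (C : Set α) : M.Con (C ∩ M.E) = M.Con C := by
  unfold Con
  rw [show C ∩ M.E = C ∩ M✶.E by rw [dual_ground], Del_inter_ground]

lemma Del_Del (M : Matroid α) (A B : Set α) : (M.Del A).Del B = M.Del (A ∪ B) := by
  unfold Del
  rw [restrict_ground_eq, restrict_restrict_eq _ Set.diff_subset, Set.diff_diff]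

lemma Con_Con (M : Matroid α) (A B : Set α) : (M.Con A).Con B = M.Con (A ∪ B) := by
  unfold Con
  rw [dual_dual, Del_Del]

@[simp] lemma Del_empty (M : Matroid α) : M.Del ∅ = M := by
  unfold Del; rw [Set.diff_empty, restrict_ground_eq_self]

@[simp] lemma Con_empty (M : Matroid α) : M.Con ∅ = M := by
  unfold Con; rw [Del_empty, dual_dual]

/-- The key characterisation of independence in a contraction. -/
theorem Con_indep_iff (hC : C ⊆ M.E) :
    (M.Con C).Indep I ↔ I ⊆ M.E \ C ∧ ∃ J, M.IsBasis J C ∧ M.Indep (I ∪ J) := by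
  have hg : (M✶.Del C).E = M.E \ C := by simp [Del]
  rw [Con, dual_indep_iff_exists', hg]
  constructor
  · rintro ⟨hIE, B', hB', hdj⟩
    refine ⟨hIE, ?_⟩
    rw [Del, isBase_restrict_iff', isBasis'_iff_isBasis Set.diff_subset] at hB'
    obtain ⟨Bs, hBs, hsub⟩ := hB'.indep.exists_isBase_superset
    have hBeq : B' = Bs ∩ (M✶.E \ C) :=
      hB'.eq_of_subset_indep (hBs.indep.inter_right _)
        (Set.subset_inter hsub hB'.subset) Set.inter_subset_right
    have hbas := (hBs.inter_isBasis_iff_compl_inter_isBasis_dual Set.diff_subset).1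
      (hBeq ▸ hB')
    rw [dual_dual, dual_ground, Set.diff_diff_cancel_left hC] at hbas
    refine ⟨(M.E \ Bs) ∩ C, hbas, ?_⟩
    have hIK : I ⊆ M.E \ Bs := by
      rw [Set.subset_diff]
      refine ⟨hIE.trans Set.diff_subset, Set.disjoint_left.2 fun a haI haB => ?_⟩
      exact hdj.ne_of_mem haI (hBeq ▸ ⟨haB, by simpa using hIE haI⟩) rfl
    have hBase : M.IsBase (M.E \ Bs) := hBs.compl_isBase_of_dual
    exact hBase.indep.subset (Set.union_subset hIK Set.inter_subset_left)
  · rintro ⟨hIE, J, hJ, hIJ⟩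
    obtain ⟨K, hK, hK2⟩ := hIJ.exists_isBase_superset
    have hKC : J = K ∩ C :=
      hJ.eq_of_subset_indep (hK.indep.inter_right _)
        (Set.subset_inter (Set.subset_union_right.trans hK2) hJ.subset)
        Set.inter_subset_right
    have hbas := hK.compl_inter_isBasis_of_inter_isBasis (hKC ▸ hJ)
    refine ⟨hIE, (M.E \ K) ∩ (M.E \ C), ?_, ?_⟩
    · rw [Del, isBase_restrict_iff', isBasis'_iff_isBasis Set.diff_subset, dual_ground]
      exact hbas
    · exact Set.disjoint_left.2 fun a haI hmem =>
        hmem.1.2 (hK2 (Set.subset_union_left haI))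

lemma Indep.of_con (h : (M.Con C).Indep I) : M.Indep I := by
  rw [← Con_inter_ground] at h
  obtain ⟨-, J, -, hIJ⟩ := (Con_indep_iff Set.inter_subset_right).1 h
  exact hIJ.subset Set.subset_union_left

lemma Dep.con (h : M.Dep X) (hdj : Disjoint X C) : (M.Con C).Dep X :=
  ⟨fun hi => h.not_indep hi.of_con, by
    rw [Con_ground, Set.subset_diff]; exact ⟨h.subset_ground, hdj⟩⟩

lemma Indep.con_of_indep_union (hCi : M.Indep C) (h : M.Indep (I ∪ C)) (hdj : Disjoint I C) :
    (M.Con C).Indep I := by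
  rw [Con_indep_iff hCi.subset_ground]
  exact ⟨Set.subset_diff.2 ⟨(h.subset Set.subset_union_left).subset_ground, hdj⟩,
    C, hCi.isBasis_self, h⟩

lemma Dep_con_of_dep_union (hCi : M.Indep C) (hXE : X ⊆ M.E) (hdj : Disjoint X C)
    (hdep : ¬ M.Indep (X ∪ C)) : (M.Con C).Dep X := by
  refine ⟨fun hi => ?_, by rw [Con_ground, Set.subset_diff]; exact ⟨hXE, hdj⟩⟩
  rw [Con_indep_iff hCi.subset_ground] at hi
  obtain ⟨-, J, hJ, hXJ⟩ := hi
  rw [hCi.eq_of_isBasis hJ] at hXJ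
  exact hdep hXJ

theorem Con_Del_comm (hC : C ⊆ M.E) (hD : D ⊆ M.E) (hdj : Disjoint C D) :
    (M.Con C).Del D = (M.Del D).Con C := by
  have hCD : C ⊆ (M.Del D).E := by
    rw [Del_ground, Set.subset_diff]; exact ⟨hC, hdj⟩
  refine ext_indep ?_ fun I hI => ?_
  · rw [Del_ground, Con_ground, Con_ground, Del_ground, Set.diff_diff, Set.diff_diff,
      Set.union_comm]
  · rw [Del_indep_iff, Con_indep_iff hC, Con_indep_iff hCD]
    simp only [Del_ground, Set.subset_diff]
    constructor
    · rintro ⟨⟨⟨hIE, hIC⟩, J, hJ, hIJ⟩, hID⟩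
      have hJD : Disjoint J D := Set.disjoint_left.2 fun a haJ haD =>
        hdj.ne_of_mem (hJ.subset haJ) haD rfl
      refine ⟨⟨⟨hIE, hID⟩, hIC⟩, J, ?_, hIJ.del (Set.disjoint_union_left.2 ⟨hID, hJD⟩)⟩
      rw [Del, isBasis_restrict_iff', Set.inter_eq_self_of_subset_left hC]
      exact ⟨hJ, hCD⟩
    · rintro ⟨⟨⟨hIE, hID⟩, hIC⟩, J, hJ, hIJ⟩
      rw [Del, isBasis_restrict_iff', Set.inter_eq_self_of_subset_left hC] at hJ
      exact ⟨⟨⟨hIE, hIC⟩, J, hJ.1, hIJ.of_del⟩, hID⟩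

/-- Contracting a loop is the same as deleting it. -/
theorem Con_loop_eq_Del (h : M.Dep {c}) : M.Con {c} = M.Del {c} := by
  have hcE : ({c} : Set α) ⊆ M.E := h.subset_ground
  refine ext_indep (by rw [Con_ground, Del_ground]) fun I hI => ?_
  rw [Con_ground] at hI
  rw [Con_indep_iff hcE, Del_indep_iff]
  have hbas : ∀ J, M.IsBasis J {c} ↔ J = ∅ := by
    intro J
    constructor
    · intro hJ
      rcases Set.subset_singleton_iff_eq.1 hJ.subset with h' | h'
      · exact h'
      · exact absurd (h' ▸ hJ.indep) h.not_indep
    · rintro rfl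
      rw [isBasis_iff]
      exact ⟨M.empty_indep, Set.empty_subset _, fun J hJ _ hJc => by
        rcases Set.subset_singleton_iff_eq.1 hJc with h' | h'
        · exact h'.symm
        · exact absurd (h' ▸ hJ) h.not_indep⟩
  constructor
  · rintro ⟨hIE, J, hJ, hIJ⟩
    rw [hbas J] at hJ
    subst hJ
    rw [Set.union_empty] at hIJ
    exact ⟨hIJ, (Set.subset_diff.1 hIE).2⟩
  · rintro ⟨hIi, hIdj⟩
    exact ⟨Set.subset_diff.2 ⟨hIi.subset_ground, hIdj⟩, ∅, (hbas ∅).2 rfl,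
      by rwa [Set.union_empty]⟩

/-- Contracting a coloop is the same as deleting it. -/
theorem Con_coloop_eq_Del (h : M✶.Dep {c}) : M.Con {c} = M.Del {c} := by
  have h1 : M✶.Con {c} = M✶.Del {c} := Con_loop_eq_Del h
  have h2 := congrArg Matroid.dual h1
  rw [Con_dual, Del_dual, dual_dual] at h2
  exact h2.symm

end PartA
section PartB

variable {M : Matroid α} {I X Y W B : Set α} {c : ℕ∞}

lemma le_eRk_of_indep (h : M.Indep I) (hIX : I ⊆ X) : I.encard ≤ M.eRk' X :=
  le_iSup₂_of_le I ⟨h, hIX⟩ le_rfl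

lemma eRk_le_of_forall (h : ∀ I, M.Indep I → I ⊆ X → I.encard ≤ c) : M.eRk' X ≤ c :=
  iSup₂_le fun I hI => h I hI.1 hI.2

lemma enat_le_of_lt_add_one {a b : ℕ∞} (hb : b ≠ ⊤) (h : a < b + 1) : a ≤ b :=
  Order.le_of_lt_add_one h

lemma enat_le_sub_one {a b : ℕ∞} (h : a + 1 ≤ b) (hb : b ≠ ⊤) : a ≤ b - 1 := by
  lift b to ℕ using hb
  have ha : a ≠ ⊤ := fun h' => by rw [h'] at h; simp at h
  lift a to ℕ using ha
  have h1 : ((b:ℕ∞) - 1) = ((b - 1 : ℕ) : ℕ∞) := by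
    rw [ENat.coe_sub]; norm_num
  rw [h1]
  have : (a:ℕ) + 1 ≤ b := by exact_mod_cast h
  exact_mod_cast (by omega : a ≤ b - 1)

lemma enat_two_add_sub_one {r : ℕ∞} (hr : r ≠ ⊤) (h1 : 1 ≤ r) : (2:ℕ∞) + (r - 1) = r + 1 := by
  lift r to ℕ using hr
  have h1' : 1 ≤ r := by exact_mod_cast h1
  have hs : ((r:ℕ∞) - 1) = ((r - 1 : ℕ) : ℕ∞) := by rw [ENat.coe_sub]; norm_num
  rw [hs]
  exact_mod_cast (by omega : 2 + (r - 1) = r + 1)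

lemma enat_three_add_sub_one {r : ℕ∞} (hr : r ≠ ⊤) (h1 : 1 ≤ r) : (3:ℕ∞) + (r - 1) = r + 2 := by
  lift r to ℕ using hr
  have h1' : 1 ≤ r := by exact_mod_cast h1
  have hs : ((r:ℕ∞) - 1) = ((r - 1 : ℕ) : ℕ∞) := by rw [ENat.coe_sub]; norm_num
  rw [hs]
  exact_mod_cast (by omega : 3 + (r - 1) = r + 2)

lemma enat_four_le_of_add {a b e : ℕ∞} (h : a + b = e) (he : 8 ≤ e) (hb : b ≤ 4) : 4 ≤ a := by
  by_contra h'
  push_neg at h'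
  have ha : a ≤ 3 := enat_le_of_lt_add_one (by norm_num)
    (by rw [show (3:ℕ∞) + 1 = 4 by norm_num]; exact h')
  have h7 : e ≤ 7 := by
    rw [← h]
    calc a + b ≤ 3 + 4 := add_le_add ha hb
    _ = 7 := by norm_num
  have := he.trans h7
  norm_num at this

/-- In a matroid whose dual has a dependent set `W`, independent sets avoiding `W`
are not bases, so their size is at most `eRk' E - 1`. -/
lemma encard_add_one_le_of_dual_dep (hW : M✶.Dep W) (hI : M.Indep I)
    (hIW : I ⊆ M.E \ W) : I.encard + 1 ≤ M.eRk' M.E := by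
  obtain ⟨B, hB, hIB⟩ := hI.exists_isBase_superset
  have hWE : W ⊆ M.E := hW.subset_ground
  have hne : I ≠ B := by
    rintro rfl
    have hco : M.Coindep W := (coindep_iff_exists hWE).2 ⟨I, hB, hIW⟩
    exact hW.not_indep hco
  have hBle : B.encard ≤ M.eRk' M.E := le_eRk_of_indep hB.indep hB.subset_ground
  by_cases hBfin : B.Finite
  · have hlt : I.encard < B.encard := (hBfin.subset hIB).encard_lt_encard (hIB.ssubset_of_ne hne)
    have hItop : I.encard ≠ ⊤ := hlt.ne_top
    exact ((ENat.add_one_le_iff hItop).2 hlt).trans hBle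
  · rw [Set.Infinite.encard_eq hBfin] at hBle
    have : M.eRk' M.E = ⊤ := top_le_iff.1 hBle
    rw [this]
    exact le_top

lemma three_le_of_dep (hN3 : M.ThreeConnected) (hcard : (8:ℕ∞) ≤ M.E.encard)
    (hX : M.Dep X) : 3 ≤ X.encard := by
  by_contra h3
  push_neg at h3
  have h2 : X.encard ≤ 2 := enat_le_of_lt_add_one (by norm_num)
    (by rw [show (2:ℕ∞) + 1 = 3 by norm_num]; exact h3)
  obtain ⟨X', hXX', hX'E, hX'2⟩ := Set.exists_superset_subset_encard_eq hX.subset_ground h2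
    (le_trans (by norm_num) hcard)
  have hX'dep : M.Dep X' := hX.superset hXX' hX'E
  have hdiff := Set.encard_diff_add_encard_of_subset hX'E
  rw [hX'2] at hdiff
  have h4 : (4:ℕ∞) ≤ (M.E \ X').encard :=
    enat_four_le_of_add hdiff hcard (by norm_num)
  have hk : M.IsKSep 2 X' (M.E \ X') := by
    refine ⟨Set.disjoint_left.2 fun a ha hb => hb.2 ha, Set.union_diff_cancel hX'E,
      ?_, ?_, ?_⟩
    · rw [hX'2]; norm_num
    · exact le_trans (by norm_num) h4
    · unfold ConnBddBy
      have hXr : M.eRk' X' ≤ 1 := eRk_le_of_forall fun I hI hsub => by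
        have hne : I ≠ X' := fun h => hX'dep.not_indep (h ▸ hI)
        have hlt : I.encard < X'.encard :=
          ((Set.finite_of_encard_eq_coe (by exact_mod_cast hX'2)).subset hsub).encard_lt_encard
            (hsub.ssubset_of_ne hne)
        rw [hX'2] at hlt
        exact enat_le_of_lt_add_one (by norm_num)
          (by rw [show (1:ℕ∞) + 1 = 2 by norm_num]; exact hlt)
      have hEr : M.eRk' (M.E \ X') ≤ M.eRk' M.E := eRk_le_of_forall fun I hI _ =>
        le_eRk_of_indep hI hI.subset_ground
      calc M.eRk' X' + M.eRk' (M.E \ X') ≤ 1 + M.eRk' M.E := add_le_add hXr hEr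
      _ = M.eRk' M.E + 1 := add_comm _ _
      _ ≤ M.eRk' M.E + ((2 - 1 : ℕ) : ℕ∞) := by norm_num
  exact hN3 2 (by norm_num) (by norm_num) X' (M.E \ X') hk

lemma three_le_of_dual_dep (hN3 : M.ThreeConnected) (hcard : (8:ℕ∞) ≤ M.E.encard)
    (hX : M✶.Dep X) : 3 ≤ X.encard := by
  by_contra h3
  push_neg at h3
  have h2 : X.encard ≤ 2 := enat_le_of_lt_add_one (by norm_num)
    (by rw [show (2:ℕ∞) + 1 = 3 by norm_num]; exact h3)
  have hXE : X ⊆ M.E := by rw [← dual_ground]; exact hX.subset_ground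
  obtain ⟨X', hXX', hX'E, hX'2⟩ := Set.exists_superset_subset_encard_eq hXE h2
    (le_trans (by norm_num) hcard)
  have hX'dep : M✶.Dep X' := hX.superset hXX' (by rwa [dual_ground])
  have hdiff := Set.encard_diff_add_encard_of_subset hX'E
  rw [hX'2] at hdiff
  have h4 : (4:ℕ∞) ≤ (M.E \ X').encard :=
    enat_four_le_of_add hdiff hcard (by norm_num)
  have hk : M.IsKSep 2 X' (M.E \ X') := by
    refine ⟨Set.disjoint_left.2 fun a ha hb => hb.2 ha, Set.union_diff_cancel hX'E,
      ?_, ?_, ?_⟩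
    · rw [hX'2]; norm_num
    · exact le_trans (by norm_num) h4
    · unfold ConnBddBy
      by_cases htop : M.eRk' M.E = ⊤
      · rw [htop]
        simp
      have hXr : M.eRk' X' ≤ 2 := eRk_le_of_forall fun I hI hsub =>
        le_trans (Set.encard_le_encard hsub) (le_of_eq hX'2)
      have hkey : ∀ I, M.Indep I → I ⊆ M.E \ X' → I.encard + 1 ≤ M.eRk' M.E :=
        fun I hI hsub => encard_add_one_le_of_dual_dep hX'dep hI hsub
      have h1R : (1:ℕ∞) ≤ M.eRk' M.E := by
        have := hkey ∅ M.empty_indep (Set.empty_subset _)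
        simpa using this
      have hEr : M.eRk' (M.E \ X') ≤ M.eRk' M.E - 1 := eRk_le_of_forall fun I hI hsub =>
        enat_le_sub_one (hkey I hI hsub) htop
      calc M.eRk' X' + M.eRk' (M.E \ X') ≤ 2 + (M.eRk' M.E - 1) := add_le_add hXr hEr
      _ = M.eRk' M.E + 1 := enat_two_add_sub_one htop h1R
      _ ≤ M.eRk' M.E + ((2 - 1 : ℕ) : ℕ∞) := by norm_num
  exact hN3 2 (by norm_num) (by norm_num) X' (M.E \ X') hk

lemma no_dep_codep_quad (hNi4 : M.InternallyFourConnected) (hcard : (8:ℕ∞) ≤ M.E.encard)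
    (hYE : Y ⊆ M.E) (hY4 : Y.encard = 4) (hYdep : M.Dep Y) (hWY : W ⊆ Y)
    (hW : M✶.Dep W) : False := by
  have hdiff := Set.encard_diff_add_encard_of_subset hYE
  rw [hY4] at hdiff
  have h4 : (4:ℕ∞) ≤ (M.E \ Y).encard := enat_four_le_of_add hdiff hcard le_rfl
  have hk : M.IsKSep 3 Y (M.E \ Y) := by
    refine ⟨Set.disjoint_left.2 fun a ha hb => hb.2 ha, Set.union_diff_cancel hYE,
      ?_, ?_, ?_⟩
    · rw [hY4]; norm_num
    · exact le_trans (by norm_num) h4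
    · unfold ConnBddBy
      by_cases htop : M.eRk' M.E = ⊤
      · rw [htop]
        simp
      have hYr : M.eRk' Y ≤ 3 := eRk_le_of_forall fun I hI hsub => by
        have hne : I ≠ Y := fun h => hYdep.not_indep (h ▸ hI)
        have hlt : I.encard < Y.encard :=
          ((Set.finite_of_encard_eq_coe (by exact_mod_cast hY4)).subset hsub).encard_lt_encard
            (hsub.ssubset_of_ne hne)
        rw [hY4] at hlt
        exact enat_le_of_lt_add_one (by norm_num)
          (by rw [show (3:ℕ∞) + 1 = 4 by norm_num]; exact hlt)
      have hkey : ∀ I, M.Indep I → I ⊆ M.E \ Y → I.encard + 1 ≤ M.eRk' M.E :=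
        fun I hI hsub => encard_add_one_le_of_dual_dep hW hI
          (hsub.trans (Set.diff_subset_diff_right hWY))
      have h1R : (1:ℕ∞) ≤ M.eRk' M.E := by
        have := hkey ∅ M.empty_indep (Set.empty_subset _)
        simpa using this
      have hEr : M.eRk' (M.E \ Y) ≤ M.eRk' M.E - 1 := eRk_le_of_forall fun I hI hsub =>
        enat_le_sub_one (hkey I hI hsub) htop
      calc M.eRk' Y + M.eRk' (M.E \ Y) ≤ 3 + (M.eRk' M.E - 1) := add_le_add hYr hEr
      _ = M.eRk' M.E + 2 := enat_three_add_sub_one htop h1R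
      _ ≤ M.eRk' M.E + ((3 - 1 : ℕ) : ℕ∞) := by norm_num
  rcases hNi4.2 Y (M.E \ Y) hk with h | h
  · rw [hY4] at h
    norm_num at h
  · have := h4.trans h
    norm_num at this
end PartB
section PartC

variable {M M₁ M₂ M₃ : Matroid α} {C D X : Set α} {x : α} {N : Matroid β}

lemma IsMinorOf.trans (h12 : M₁.IsMinorOf M₂) (h23 : M₂.IsMinorOf M₃) :
    M₁.IsMinorOf M₃ := by
  obtain ⟨C', D', hdj', hC', hD', rfl⟩ := h12
  obtain ⟨C, D, hdj, hC, hD, rfl⟩ := h23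
  have hg : ((M₃.Con C).Del D).E = (M₃.E \ C) \ D := by rw [Del_ground, Con_ground]
  rw [hg] at hC' hD'
  have hC'sub : C' ⊆ (M₃.Con C).E := by rw [Con_ground]; exact hC'.trans Set.diff_subset
  have hDsub : D ⊆ (M₃.Con C).E := by
    rw [Con_ground, Set.subset_diff]; exact ⟨hD, hdj.symm⟩
  have hC'D : Disjoint C' D := Set.disjoint_left.2 fun a ha hb => (hC' ha).2 hb
  refine ⟨C ∪ C', D ∪ D', ?_, ?_, ?_, ?_⟩
  · rw [Set.disjoint_union_left, Set.disjoint_union_right, Set.disjoint_union_right]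
    refine ⟨⟨hdj, ?_⟩, hC'D, hdj'⟩
    exact Set.disjoint_left.2 fun a ha hb => ((hD' hb).1).2 ha
  · exact Set.union_subset hC (hC'.trans (Set.diff_subset.trans Set.diff_subset))
  · exact Set.union_subset hD (hD'.trans (Set.diff_subset.trans Set.diff_subset))
  · rw [← Con_Con, ← Del_Del]
    congr 1
    rw [Con_Del_comm hC'sub hDsub hC'D]

lemma del_isMinorOf (M : Matroid α) (D : Set α) : (M.Del D).IsMinorOf M := by
  refine ⟨∅, D ∩ M.E, by simp, by simp, Set.inter_subset_right, ?_⟩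
  rw [Con_empty, Del_inter_ground]

lemma con_isMinorOf (M : Matroid α) (C : Set α) : (M.Con C).IsMinorOf M := by
  refine ⟨C ∩ M.E, ∅, by simp, Set.inter_subset_right, by simp, ?_⟩
  rw [Del_empty, Con_inter_ground]

lemma HasIsoMinor.of_isMinorOf (h : M₁.HasIsoMinor N) (hm : M₁.IsMinorOf M₂) :
    M₂.HasIsoMinor N := by
  obtain ⟨M₀, hmin, hiso⟩ := h
  exact ⟨M₀, hmin.trans hm, hiso⟩

lemma minor_del_of_mem (hdj : Disjoint C D) (hC : C ⊆ M.E) (hD : D ⊆ M.E) (hx : x ∈ D) :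
    ((M.Con C).Del D).IsMinorOf (M.Del {x}) := by
  have hxE : ({x} : Set α) ⊆ M.E := Set.singleton_subset_iff.2 (hD hx)
  have hCx : Disjoint C {x} := Set.disjoint_left.2 fun a ha hb =>
    hdj.ne_of_mem ha (hb ▸ hx) rfl
  have heq : (M.Con C).Del D = (((M.Del {x}).Con C).Del (D \ {x})) := by
    conv_lhs => rw [← Set.union_diff_cancel (Set.singleton_subset_iff.2 hx), ← Del_Del,
      Con_Del_comm hC hxE hCx]
  rw [heq]
  refine ⟨C, D \ {x}, hdj.mono_right Set.diff_subset, ?_, ?_, rfl⟩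
  · rw [Del_ground, Set.subset_diff]; exact ⟨hC, hCx⟩
  · rw [Del_ground]; exact Set.diff_subset_diff_left hD

lemma minor_con_of_mem (hdj : Disjoint C D) (hC : C ⊆ M.E) (hD : D ⊆ M.E) (hx : x ∈ C) :
    ((M.Con C).Del D).IsMinorOf (M.Con {x}) := by
  have hxD : Disjoint {x} D := Set.disjoint_left.2 fun a ha hb =>
    hdj.ne_of_mem (ha ▸ hx) hb rfl
  have heq : (M.Con C).Del D = (((M.Con {x}).Con (C \ {x})).Del D) := by
    conv_lhs => rw [← Set.union_diff_cancel (Set.singleton_subset_iff.2 hx), ← Con_Con]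
  rw [heq]
  refine ⟨C \ {x}, D, hdj.mono_left Set.diff_subset, ?_, ?_, rfl⟩
  · rw [Con_ground]; exact Set.diff_subset_diff_left hC
  · rw [Con_ground, Set.subset_diff]; exact ⟨hD, hxD.symm⟩

lemma dep_persist (hX : M.Dep X) (hXC : Disjoint X C) (hXD : Disjoint X D) :
    ((M.Con C).Del D).Dep X := (hX.con hXC).del hXD

lemma codep_persist (hX : M✶.Dep X) (hXC : Disjoint X C) (hXD : Disjoint X D) :
    ((M.Con C).Del D)✶.Dep X := by
  rw [Del_dual, Con_dual]
  exact (hX.del hXC).con hXD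

end PartC
section PartD

variable {M M₀ M₁ M₂ : Matroid α} {C D I X S : Set α} {N : Matroid β} {b c x : α}

lemma IsIsoTo.exists_map (hne : N.E.Nonempty) (h : M₀.IsIsoTo N) :
    ∃ (f : α → β) (hf : Set.InjOn f M₀.E), N = M₀.map f hf := by
  classical
  obtain ⟨e, he⟩ := h
  obtain ⟨b₀, hb₀⟩ := hne
  set f : α → β := fun x => if h : x ∈ M₀.E then (e ⟨x, h⟩ : β) else b₀ with hfdef
  have hfval : ∀ (x : α) (hx : x ∈ M₀.E), f x = (e ⟨x, hx⟩ : β) := fun x hx => dif_pos hx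
  have hf : Set.InjOn f M₀.E := by
    intro x hx y hy hxy
    rw [hfval x hx, hfval y hy] at hxy
    have h2 := e.injective (Subtype.val_injective hxy)
    exact congrArg Subtype.val h2
  have himg : ∀ S : Set ↥(M₀.E), f '' (Subtype.val '' S) = Subtype.val '' (e '' S) := by
    intro S
    rw [Set.image_image, Set.image_image]
    exact Set.image_congr fun a _ => by rw [hfval _ a.2, Subtype.coe_eta]
  have hground : N.E = (M₀.map f hf).E := by
    rw [map_ground, show M₀.E = Subtype.val '' (Set.univ : Set ↥(M₀.E)) from
      (Subtype.coe_image_univ _).symm, himg, Set.image_univ, Equiv.range_eq_univ,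
      Set.image_univ, Subtype.range_coe]
  refine ⟨f, hf, ext_indep hground fun I hIE => ?_⟩
  constructor
  · intro hI
    set Ih : Set ↥M₀.E := e.symm '' (Subtype.val ⁻¹' I) with hIh
    have h1 : Subtype.val '' (e '' Ih) = I := by
      rw [hIh, Equiv.image_symm_image, Subtype.image_preimage_coe,
        Set.inter_eq_self_of_subset_right hIE]
    have h2 : M₀.Indep (Subtype.val '' Ih) := (he Ih).2 (by rw [h1]; exact hI)
    rw [map_indep_iff]
    exact ⟨Subtype.val '' Ih, h2, by rw [himg, h1]⟩
  · intro hI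
    rw [map_indep_iff] at hI
    obtain ⟨I₀, hI₀, rfl⟩ := hI
    set Ih : Set ↥M₀.E := Subtype.val ⁻¹' I₀ with hIh
    have h1 : Subtype.val '' Ih = I₀ := by
      rw [hIh, Subtype.image_preimage_coe,
        Set.inter_eq_self_of_subset_right hI₀.subset_ground]
    have h2 := (he Ih).1 (by rw [h1]; exact hI₀)
    rwa [← himg, h1] at h2

lemma isIsoTo_map (M₀ : Matroid α) (f : α → β) (hf : Set.InjOn f M₀.E) :
    M₀.IsIsoTo (M₀.map f hf) := by
  have hg : (M₀.map f hf).E = f '' M₀.E := map_ground _ _ _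
  refine ⟨(Equiv.Set.imageOfInjOn f M₀.E hf).trans (Equiv.setCongr hg.symm), fun I => ?_⟩
  have himg : Subtype.val '' ((Equiv.Set.imageOfInjOn f M₀.E hf).trans
      (Equiv.setCongr hg.symm) '' I) = f '' (Subtype.val '' I) := by
    rw [Set.image_image, Set.image_image]
    exact Set.image_congr fun a _ => rfl
  rw [himg]
  exact (map_image_indep_iff (by exact fun a ⟨w, _, hw⟩ => hw ▸ w.2)).symm

lemma map_congr_fun {f g : α → β} (h : ∀ x ∈ M.E, f x = g x) (hf : Set.InjOn f M.E)
    (hg : Set.InjOn g M.E) : M.map f hf = M.map g hg := by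
  have himg : ∀ S : Set α, S ⊆ M.E → f '' S = g '' S := fun S hS =>
    Set.image_congr fun a ha => h a (hS ha)
  refine ext_indep (by rw [map_ground, map_ground, himg _ le_rfl])
    fun I hI => ?_
  rw [map_indep_iff, map_indep_iff]
  constructor
  · rintro ⟨I₀, hI₀, rfl⟩
    exact ⟨I₀, hI₀, himg _ hI₀.subset_ground⟩
  · rintro ⟨I₀, hI₀, rfl⟩
    exact ⟨I₀, hI₀, (himg _ hI₀.subset_ground).symm⟩

lemma map_map_equiv (M : Matroid α) (σ : α ≃ α) (f : α → β)
    (hf : Set.InjOn f ((M.mapEquiv σ).E)) (hf2 : Set.InjOn (f ∘ σ) M.E) :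
    (M.mapEquiv σ).map f hf = M.map (f ∘ σ) hf2 := by
  refine ext_indep ?_ fun I hI => ?_
  · rw [map_ground, map_ground, mapEquiv_ground_eq, Set.image_comp]
  · rw [map_indep_iff, map_indep_iff]
    constructor
    · rintro ⟨I₀, hI₀, rfl⟩
      rw [mapEquiv_indep_iff] at hI₀
      exact ⟨σ.symm '' I₀, hI₀, by rw [Set.image_comp, Equiv.image_symm_image]⟩
    · rintro ⟨I₁, hI₁, rfl⟩
      refine ⟨σ '' I₁, ?_, by rw [Set.image_comp]⟩
      rw [mapEquiv_indep_iff, Equiv.symm_image_image]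
      exact hI₁

lemma mapEquiv_dual (M : Matroid α) (σ : α ≃ β) : (M✶).mapEquiv σ = (M.mapEquiv σ)✶ := by
  rw [mapEquiv_eq_map, mapEquiv_eq_map, map_dual]

lemma mapEquiv_Del (M : Matroid α) (σ : α ≃ β) (D : Set α) :
    (M.Del D).mapEquiv σ = (M.mapEquiv σ).Del (σ '' D) := by
  refine ext_indep ?_ fun I hI => ?_
  · rw [mapEquiv_ground_eq, Del_ground, Del_ground, mapEquiv_ground_eq,
      Set.image_diff σ.injective]
  · rw [mapEquiv_indep_iff, Del_indep_iff, Del_indep_iff, mapEquiv_indep_iff]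
    have hdj : Disjoint (σ.symm '' I) D ↔ Disjoint I (σ '' D) := by
      rw [← Set.disjoint_image_iff σ.injective, Equiv.image_symm_image]
    rw [hdj]

lemma mapEquiv_Con (M : Matroid α) (σ : α ≃ β) (C : Set α) :
    (M.Con C).mapEquiv σ = (M.mapEquiv σ).Con (σ '' C) := by
  rw [Con, mapEquiv_dual, mapEquiv_Del, mapEquiv_dual, Con]

/-- The parallel exchange property. -/
lemma indep_insert_of_parallel (hbc : M.Dep {b,c}) (hb : M.Indep {b})
    (hI : M.Indep (insert c I)) (hbI : b ∉ I) (hcI : c ∉ I) : M.Indep (insert b I) := by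
  have hIi : M.Indep I := hI.subset (Set.subset_insert _ _)
  have hbE : b ∈ M.E := hb.subset_ground rfl
  by_contra hcon
  have hbcl : b ∈ M.closure I := by
    have hiff := hIi.insert_indep_iff_of_notMem hbI
    by_contra hb2
    exact hcon (hiff.2 ⟨hbE, hb2⟩)
  have hccl : c ∈ M.closure {b} := by
    have hdep : M.Dep (insert c {b}) := by
      rw [show insert c {b} = ({b,c} : Set α) from by rw [Set.pair_comm]]
      exact hbc
    exact (hb.insert_dep_iff.1 hdep).1
  have hsub : M.closure {b} ⊆ M.closure I :=
    M.closure_subset_closure_of_subset_closure (Set.singleton_subset_iff.2 hbcl)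
  have hc2 : c ∈ M.closure I := hsub hccl
  have h2 := (hIi.insert_indep_iff_of_notMem hcI).1 hI
  exact h2.2 hc2

lemma Dep.pair_ne (hbc : M.Dep {b,c}) (hb : M.Indep {b}) : b ≠ c := by
  rintro rfl
  rw [Set.pair_eq_singleton] at hbc
  exact hbc.not_indep hb

/-- Swapping a parallel pair is an automorphism. -/
lemma mapEquiv_swap_eq_self [DecidableEq α] (hbc : M.Dep {b,c}) (hb : M.Indep {b}) (hc : M.Indep {c}) :
    M.mapEquiv (Equiv.swap b c) = M := by
  classical
  have hbE : b ∈ M.E := hb.subset_ground rfl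
  have hcE : c ∈ M.E := hc.subset_ground rfl
  have hne : b ≠ c := hbc.pair_ne hb
  have hpre : ∀ S : Set α, Equiv.swap b c '' S = Equiv.swap b c ⁻¹' S := fun S => by
    rw [Equiv.image_eq_preimage_symm, Equiv.symm_swap]
  have himgboth : ∀ S : Set α, (b ∈ S ↔ c ∈ S) → Equiv.swap b c '' S = S := by
    intro S hS
    rw [hpre]
    ext z
    simp only [Set.mem_preimage, Equiv.swap_apply_def]
    split_ifs with h1 h2
    · subst h1; tauto
    · subst h2; tauto
    · tauto
  have hinsert : ∀ (u v : α) (S : Set α), u ∈ S → v ∉ S → u ≠ v →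
      Equiv.swap b c = Equiv.swap u v → Equiv.swap b c '' S = insert v (S \ {u}) := by
    intro u v S huS hvS huv hcomm
    rw [hpre, hcomm]
    ext z
    simp only [Set.mem_preimage, Equiv.swap_apply_def, Set.mem_insert_iff, Set.mem_diff,
      Set.mem_singleton_iff]
    split_ifs with h1 h2
    · subst h1; tauto
    · subst h2; tauto
    · tauto
  have hind : ∀ I, M.Indep I → M.Indep (Equiv.swap b c '' I) := by
    intro I hI
    by_cases hbI : b ∈ I <;> by_cases hcI : c ∈ I
    · rwa [himgboth I (iff_of_true hbI hcI)]
    · rw [hinsert b c I hbI hcI hne rfl]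
      have hI' : M.Indep (insert b (I \ {b})) := by
        rwa [Set.insert_diff_singleton, Set.insert_eq_self.2 hbI]
      exact indep_insert_of_parallel (by rwa [Set.pair_comm]) hc hI'
        (fun h => hcI h.1) (fun h => h.2 rfl)
    · rw [hinsert c b I hcI hbI hne.symm (Equiv.swap_comm b c)]
      have hI' : M.Indep (insert c (I \ {c})) := by
        rwa [Set.insert_diff_singleton, Set.insert_eq_self.2 hcI]
      exact indep_insert_of_parallel hbc hb hI' (fun h => hbI h.1) (fun h => h.2 rfl)
    · rwa [himgboth I (iff_of_false hbI hcI)]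
  have hinv : ∀ S : Set α, Equiv.swap b c '' (Equiv.swap b c '' S) = S := fun S => by
    rw [← Set.image_comp, show Equiv.swap b c ∘ Equiv.swap b c = id from
      funext fun z => Equiv.swap_apply_self _ _ _, Set.image_id]
  refine ext_indep ?_ fun I hI => ?_
  · rw [mapEquiv_ground_eq]
    exact himgboth M.E (iff_of_true hbE hcE)
  · rw [mapEquiv_indep_iff, Equiv.symm_swap]
    exact ⟨fun h => by have := hind _ h; rwa [hinv] at this, fun h => hind I h⟩

lemma hasIsoMinor_mapEquiv (σ : α ≃ α) (hne : N.E.Nonempty) (h : M.HasIsoMinor N) :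
    (M.mapEquiv σ).HasIsoMinor N := by
  obtain ⟨M₀, ⟨C, D, hdj, hC, hD, rfl⟩, hiso⟩ := h
  obtain ⟨f, hf, hmap⟩ := hiso.exists_map hne
  have hcomp : Set.InjOn (f ∘ σ.symm) ((((M.Con C).Del D).mapEquiv σ).E) := by
    intro u hu v hv huv
    rw [mapEquiv_ground_eq] at hu hv
    have hmemu : σ.symm u ∈ ((M.Con C).Del D).E := by
      have := Set.mem_image_of_mem σ.symm hu
      rwa [Equiv.symm_image_image] at this
    have hmemv : σ.symm v ∈ ((M.Con C).Del D).E := by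
      have := Set.mem_image_of_mem σ.symm hv
      rwa [Equiv.symm_image_image] at this
    have := hf hmemu hmemv huv
    exact σ.symm.injective this
  have hcomp2 : Set.InjOn ((f ∘ σ.symm) ∘ σ) (((M.Con C).Del D).E) := by
    intro u hu v hv huv
    simp only [Function.comp_apply, Equiv.symm_apply_apply] at huv
    exact hf hu hv huv
  refine ⟨((M.Con C).Del D).mapEquiv σ, ⟨σ '' C, σ '' D, ?_, ?_, ?_, ?_⟩, ?_⟩
  · exact (Set.disjoint_image_iff σ.injective).2 hdj
  · rw [mapEquiv_ground_eq]; exact Set.image_mono hC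
  · rw [mapEquiv_ground_eq]; exact Set.image_mono hD
  · rw [← mapEquiv_Con, ← mapEquiv_Del]
  · have key : (((M.Con C).Del D).mapEquiv σ).map (f ∘ σ.symm) hcomp
        = ((M.Con C).Del D).map f hf := by
      rw [map_map_equiv _ σ _ hcomp hcomp2]
      exact map_congr_fun (fun x _ => by simp) hcomp2 hf
    have h2 := isIsoTo_map (((M.Con C).Del D).mapEquiv σ) (f ∘ σ.symm) hcomp
    rwa [key, ← hmap] at h2

end PartD
section PartE

variable {M M₀ : Matroid α} {C D I X Y W : Set α} {N : Matroid β} {b c x : α}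

lemma nonempty_ground_of_card (hcard : (8:ℕ∞) ≤ N.E.encard) : N.E.Nonempty := by
  rw [← Set.encard_pos]
  exact lt_of_lt_of_le (by norm_num) hcard

lemma IsIsoTo.dep_contra (hNi4 : N.InternallyFourConnected) (hcard : (8:ℕ∞) ≤ N.E.encard)
    (hiso : M₀.IsIsoTo N) (hdep : M₀.Dep X) (hsmall : X.encard ≤ 2) : False := by
  obtain ⟨f, hf, hmap⟩ := hiso.exists_map (nonempty_ground_of_card hcard)
  have hdepN : N.Dep (f '' X) := by
    rw [hmap]
    exact map_dep_iff.2 ⟨X, hdep, rfl⟩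
  have h3 := three_le_of_dep hNi4.1 hcard hdepN
  rw [(hf.mono hdep.subset_ground).encard_image] at h3
  exact absurd (h3.trans hsmall) (by norm_num)

lemma IsIsoTo.codep_contra (hNi4 : N.InternallyFourConnected) (hcard : (8:ℕ∞) ≤ N.E.encard)
    (hiso : M₀.IsIsoTo N) (hdep : M₀✶.Dep X) (hsmall : X.encard ≤ 2) : False := by
  obtain ⟨f, hf, hmap⟩ := hiso.exists_map (nonempty_ground_of_card hcard)
  have hmapd : N✶ = M₀✶.map f hf := by rw [hmap, map_dual]
  have hdepN : N✶.Dep (f '' X) := by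
    rw [hmapd]
    exact map_dep_iff.2 ⟨X, hdep, rfl⟩
  have h3 := three_le_of_dual_dep hNi4.1 hcard hdepN
  have hXE : X ⊆ M₀.E := hdep.subset_ground
  rw [(hf.mono hXE).encard_image] at h3
  exact absurd (h3.trans hsmall) (by norm_num)

lemma IsIsoTo.quad_contra (hNi4 : N.InternallyFourConnected) (hcard : (8:ℕ∞) ≤ N.E.encard)
    (hiso : M₀.IsIsoTo N) (hY : Y ⊆ M₀.E) (hY4 : Y.encard = 4) (hdep : M₀.Dep Y)
    (hWY : W ⊆ Y) (hcodep : M₀✶.Dep W) : False := by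
  obtain ⟨f, hf, hmap⟩ := hiso.exists_map (nonempty_ground_of_card hcard)
  have hmapd : N✶ = M₀✶.map f hf := by rw [hmap, map_dual]
  refine no_dep_codep_quad hNi4 hcard (Y := f '' Y) (W := f '' W) ?_ ?_ ?_ ?_ ?_
  · rw [hmap, map_ground]
    exact Set.image_mono hY
  · rw [(hf.mono hY).encard_image, hY4]
  · rw [hmap]
    exact map_dep_iff.2 ⟨Y, hdep, rfl⟩
  · exact Set.image_mono hWY
  · rw [hmapd]
    exact map_dep_iff.2 ⟨W, hcodep, rfl⟩

lemma con_del_extract_del (hC : C ⊆ M.E) (hD : D ⊆ M.E) (hdj : Disjoint C D) (hx : x ∈ D) :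
    (M.Con C).Del D = ((M.Del {x}).Con C).Del (D \ {x}) := by
  have hxE : ({x} : Set α) ⊆ M.E := Set.singleton_subset_iff.2 (hD hx)
  have hCx : Disjoint C {x} := Set.disjoint_left.2 fun a ha hb =>
    hdj.ne_of_mem ha (hb ▸ hx) rfl
  conv_lhs => rw [← Set.union_diff_cancel (Set.singleton_subset_iff.2 hx), ← Del_Del,
    Con_Del_comm hC hxE hCx]

lemma con_del_extract_con (hx : x ∈ C) :
    (M.Con C).Del D = ((M.Con {x}).Con (C \ {x})).Del D := by
  conv_lhs => rw [← Set.union_diff_cancel (Set.singleton_subset_iff.2 hx), ← Con_Con]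

/-- If `{b, c}` is a parallel pair in `M` and `M` has an `N`-minor, then both
`M \ b` and `M \ c` have `N`-minors. -/
lemma parallel_hasIsoMinor (hNi4 : N.InternallyFourConnected) (hcard : (8:ℕ∞) ≤ N.E.encard)
    (hbc : M.Dep {b,c}) (hb : M.Indep {b}) (hc : M.Indep {c}) (h : M.HasIsoMinor N) :
    (M.Del {b}).HasIsoMinor N ∧ (M.Del {c}).HasIsoMinor N := by
  classical
  have hne : N.E.Nonempty := nonempty_ground_of_card hcard
  have hbE : b ∈ M.E := hb.subset_ground rfl
  have hcE : c ∈ M.E := hc.subset_ground rfl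
  have hnebc : b ≠ c := hbc.pair_ne hb
  have hauto := mapEquiv_swap_eq_self hbc hb hc
  have hswapbc : (M.Del {c}).HasIsoMinor N → (M.Del {b}).HasIsoMinor N := by
    intro h'
    have h2 := hasIsoMinor_mapEquiv (Equiv.swap b c) hne h'
    rwa [mapEquiv_Del, hauto, Set.image_singleton, Equiv.swap_apply_right] at h2
  have hswapcb : (M.Del {b}).HasIsoMinor N → (M.Del {c}).HasIsoMinor N := by
    intro h'
    have h2 := hasIsoMinor_mapEquiv (Equiv.swap b c) hne h'
    rwa [mapEquiv_Del, hauto, Set.image_singleton, Equiv.swap_apply_left] at h2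
  suffices hkey : (M.Del {b}).HasIsoMinor N ∨ (M.Del {c}).HasIsoMinor N by
    rcases hkey with h' | h'
    exacts [⟨h', hswapcb h'⟩, ⟨hswapbc h', h'⟩]
  obtain ⟨M₀, ⟨C, D, hdj, hC, hD, rfl⟩, hiso⟩ := h
  by_cases hbD : b ∈ D
  · exact Or.inl ⟨_, minor_del_of_mem hdj hC hD hbD, hiso⟩
  by_cases hcD : c ∈ D
  · exact Or.inr ⟨_, minor_del_of_mem hdj hC hD hcD, hiso⟩
  by_cases hbC : b ∈ C
  · have hcloop : (M.Con {b}).Dep {c} := by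
      refine Dep_con_of_dep_union hb (Set.singleton_subset_iff.2 hcE)
        (Set.disjoint_singleton.2 hnebc.symm) ?_
      rw [show ({c} ∪ {b} : Set α) = {b,c} from by rw [Set.union_comm, Set.singleton_union]]
      exact hbc.not_indep
    by_cases hcC : c ∈ C
    · right
      have hCbc : ({b} ∪ (C \ {b,c}) : Set α) = C \ {c} := by
        ext z
        simp only [Set.mem_union, Set.mem_singleton_iff, Set.mem_diff, Set.mem_insert_iff]
        constructor
        · rintro (rfl | ⟨hzC, hz⟩)
          · exact ⟨hbC, hnebc⟩
          · exact ⟨hzC, fun h2 => hz (Or.inr h2)⟩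
        · rintro ⟨hzC, hzc⟩
          by_cases hzb : z = b
          · exact Or.inl hzb
          · exact Or.inr ⟨hzC, by tauto⟩
      have hkey : (M.Con C).Del D = ((M.Del {c}).Con (C \ {c})).Del D := by
        have h1 : M.Con {b,c} = (M.Del {c}).Con {b} := by
          rw [show ({b,c} : Set α) = {b} ∪ {c} from (Set.singleton_union).symm, ← Con_Con,
            Con_loop_eq_Del hcloop,
            Con_Del_comm (Set.singleton_subset_iff.2 hbE) (Set.singleton_subset_iff.2 hcE)
              (Set.disjoint_singleton.2 hnebc)]
        have h2 : ({b,c} : Set α) ⊆ C := by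
          rintro z (rfl | rfl)
          exacts [hbC, hcC]
        conv_lhs => rw [← Set.union_diff_cancel h2, ← Con_Con, h1, Con_Con, hCbc]
      refine ⟨_, ⟨C \ {c}, D, hdj.mono_left Set.diff_subset, ?_, ?_, hkey⟩, hiso⟩
      · rw [Del_ground]
        exact Set.diff_subset_diff_left hC
      · rw [Del_ground, Set.subset_diff]
        exact ⟨hD, Set.disjoint_singleton_right.2 hcD⟩
    · exfalso
      have hdep2 : ((M.Con C).Del D).Dep {c} := by
        rw [con_del_extract_con hbC]
        exact (hcloop.con (Set.disjoint_singleton_left.2 fun h => hcC h.1)).del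
          (Set.disjoint_singleton_left.2 hcD)
      exact hiso.dep_contra hNi4 hcard hdep2 (by rw [Set.encard_singleton]; norm_num)
  by_cases hcC : c ∈ C
  · exfalso
    have hbloop : (M.Con {c}).Dep {b} := by
      refine Dep_con_of_dep_union hc (Set.singleton_subset_iff.2 hbE)
        (Set.disjoint_singleton.2 hnebc) ?_
      rw [show ({b} ∪ {c} : Set α) = {b,c} from by rw [Set.singleton_union]]
      exact hbc.not_indep
    have hdep2 : ((M.Con C).Del D).Dep {b} := by
      rw [con_del_extract_con hcC]
      exact (hbloop.con (Set.disjoint_singleton_left.2 fun h => hbC h.1)).del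
        (Set.disjoint_singleton_left.2 hbD)
    exact hiso.dep_contra hNi4 hcard hdep2 (by rw [Set.encard_singleton]; norm_num)
  · exfalso
    have hdep2 : ((M.Con C).Del D).Dep {b,c} :=
      dep_persist hbc
        (Set.disjoint_left.2 (by rintro z (rfl | rfl) <;> assumption))
        (Set.disjoint_left.2 (by rintro z (rfl | rfl) <;> assumption))
    exact hiso.dep_contra hNi4 hcard hdep2 (le_of_eq (Set.encard_pair hnebc))

/-- If `{b, c}` is a series pair in `M` and `M` has an `N`-minor, then both
`M / b` and `M / c` have `N`-minors. -/
lemma series_hasIsoMinor (hNi4 : N.InternallyFourConnected) (hcard : (8:ℕ∞) ≤ N.E.encard)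
    (hbc : M✶.Dep {b,c}) (hb : M✶.Indep {b}) (hc : M✶.Indep {c}) (h : M.HasIsoMinor N) :
    (M.Con {b}).HasIsoMinor N ∧ (M.Con {c}).HasIsoMinor N := by
  classical
  have hne : N.E.Nonempty := nonempty_ground_of_card hcard
  have hbE : b ∈ M.E := by rw [← dual_ground]; exact hb.subset_ground rfl
  have hcE : c ∈ M.E := by rw [← dual_ground]; exact hc.subset_ground rfl
  have hnebc : b ≠ c := hbc.pair_ne hb
  have hauto : M.mapEquiv (Equiv.swap b c) = M := by
    have h1 := mapEquiv_swap_eq_self hbc hb hc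
    rw [mapEquiv_dual] at h1
    exact dual_injective h1
  have hswapbc : (M.Con {c}).HasIsoMinor N → (M.Con {b}).HasIsoMinor N := by
    intro h'
    have h2 := hasIsoMinor_mapEquiv (Equiv.swap b c) hne h'
    rwa [mapEquiv_Con, hauto, Set.image_singleton, Equiv.swap_apply_right] at h2
  have hswapcb : (M.Con {b}).HasIsoMinor N → (M.Con {c}).HasIsoMinor N := by
    intro h'
    have h2 := hasIsoMinor_mapEquiv (Equiv.swap b c) hne h'
    rwa [mapEquiv_Con, hauto, Set.image_singleton, Equiv.swap_apply_left] at h2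
  suffices hkey : (M.Con {b}).HasIsoMinor N ∨ (M.Con {c}).HasIsoMinor N by
    rcases hkey with h' | h'
    exacts [⟨h', hswapcb h'⟩, ⟨hswapbc h', h'⟩]
  obtain ⟨M₀, ⟨C, D, hdj, hC, hD, rfl⟩, hiso⟩ := h
  by_cases hbC : b ∈ C
  · exact Or.inl ⟨_, minor_con_of_mem hdj hC hD hbC, hiso⟩
  by_cases hcC : c ∈ C
  · exact Or.inr ⟨_, minor_con_of_mem hdj hC hD hcC, hiso⟩
  by_cases hbD : b ∈ D
  · have hcloop : (M.Del {b})✶.Dep {c} := by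
      rw [Del_dual]
      refine Dep_con_of_dep_union (M := M✶) hb
        (by rw [dual_ground]; exact Set.singleton_subset_iff.2 hcE)
        (Set.disjoint_singleton.2 hnebc.symm) ?_
      rw [show ({c} ∪ {b} : Set α) = {b,c} from by rw [Set.union_comm, Set.singleton_union]]
      exact hbc.not_indep
    by_cases hcD : c ∈ D
    · right
      have hDbc : ({b} ∪ (D \ {b,c}) : Set α) = D \ {c} := by
        ext z
        simp only [Set.mem_union, Set.mem_singleton_iff, Set.mem_diff, Set.mem_insert_iff]
        constructor
        · rintro (rfl | ⟨hzD, hz⟩)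
          · exact ⟨hbD, hnebc⟩
          · exact ⟨hzD, fun h2 => hz (Or.inr h2)⟩
        · rintro ⟨hzD, hzc⟩
          by_cases hzb : z = b
          · exact Or.inl hzb
          · exact Or.inr ⟨hzD, by tauto⟩
      have h1 : M.Del {b,c} = (M.Con {c}).Del {b} := by
        rw [show ({b,c} : Set α) = {b} ∪ {c} from (Set.singleton_union).symm, ← Del_Del,
          ← Con_coloop_eq_Del hcloop,
          Con_Del_comm (Set.singleton_subset_iff.2 hcE) (Set.singleton_subset_iff.2 hbE)
            (Set.disjoint_singleton.2 hnebc.symm)]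
      have h2 : ({b,c} : Set α) ⊆ D := by
        rintro z (rfl | rfl)
        exacts [hbD, hcD]
      have hbcC : Disjoint C ({b,c} : Set α) :=
        Set.disjoint_right.2 (by rintro z (rfl | rfl) <;> assumption)
      have hbcE : ({b,c} : Set α) ⊆ M.E := by
        rintro z (rfl | rfl) <;> assumption
      have hstep1 : C ⊆ (M.Con {c}).E := by
        rw [Con_ground, Set.subset_diff]
        exact ⟨hC, Set.disjoint_singleton_right.2 hcC⟩
      have hstep2 : ({b} : Set α) ⊆ (M.Con {c}).E := by
        rw [Con_ground, Set.subset_diff]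
        exact ⟨Set.singleton_subset_iff.2 hbE, Set.disjoint_singleton.2 hnebc⟩
      have hstep : ((M.Con {c}).Del {b}).Con C = ((M.Con {c}).Con C).Del {b} :=
        (Con_Del_comm hstep1 hstep2 (Set.disjoint_singleton_right.2 hbC)).symm
      have hkey : (M.Con C).Del D = ((M.Con {c}).Con C).Del (D \ {c}) := by
        conv_lhs => rw [← Set.union_diff_cancel h2, ← Del_Del,
          Con_Del_comm hC hbcE hbcC, h1]
        rw [hstep, Del_Del, hDbc]
      refine ⟨_, ⟨C, D \ {c}, hdj.mono_right Set.diff_subset, ?_, ?_, hkey⟩, hiso⟩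
      · rw [Con_ground, Set.subset_diff]
        exact ⟨hC, Set.disjoint_singleton_right.2 hcC⟩
      · rw [Con_ground]
        exact Set.diff_subset_diff_left hD
    · exfalso
      have hdep2 : (((M.Del {b}).Con C).Del (D \ {b}))✶.Dep {c} :=
        codep_persist hcloop (Set.disjoint_singleton_left.2 hcC)
          (Set.disjoint_singleton_left.2 fun h => hcD h.1)
      rw [← con_del_extract_del hC hD hdj hbD] at hdep2
      exact hiso.codep_contra hNi4 hcard hdep2 (by rw [Set.encard_singleton]; norm_num)
  by_cases hcD : c ∈ D
  · exfalso
    have hbloop : (M.Del {c})✶.Dep {b} := by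
      rw [Del_dual]
      refine Dep_con_of_dep_union (M := M✶) hc
        (by rw [dual_ground]; exact Set.singleton_subset_iff.2 hbE)
        (Set.disjoint_singleton.2 hnebc) ?_
      rw [show ({b} ∪ {c} : Set α) = {b,c} from by rw [Set.singleton_union]]
      exact hbc.not_indep
    have hdep2 : (((M.Del {c}).Con C).Del (D \ {c}))✶.Dep {b} :=
      codep_persist hbloop (Set.disjoint_singleton_left.2 hbC)
        (Set.disjoint_singleton_left.2 fun h => hbD h.1)
    rw [← con_del_extract_del hC hD hdj hcD] at hdep2
    exact hiso.codep_contra hNi4 hcard hdep2 (by rw [Set.encard_singleton]; norm_num)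
  · exfalso
    have hdep2 : ((M.Con C).Del D)✶.Dep {b,c} :=
      codep_persist hbc
        (Set.disjoint_left.2 (by rintro z (rfl | rfl) <;> assumption))
        (Set.disjoint_left.2 (by rintro z (rfl | rfl) <;> assumption))
    exact hiso.codep_contra hNi4 hcard hdep2 (le_of_eq (Set.encard_pair hnebc))

end PartE
section PartF

variable {M : Matroid α} {N : Matroid β} {T : Set α} {x y z : α}

lemma IsTriangle.dep (h : M.IsTriangle T) : M.Dep T := h.1.1

lemma IsTriad.dual_triangle (h : M.IsTriad T) : M✶.IsTriangle T := ⟨h.1, h.2⟩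

lemma encard_le_three (x y z : α) : ({x,y,z} : Set α).encard ≤ 3 := by
  calc ({x,y,z} : Set α).encard ≤ ({y,z} : Set α).encard + 1 := Set.encard_insert_le _ _
  _ ≤ (({z} : Set α).encard + 1) + 1 := add_le_add_left (Set.encard_insert_le _ _) 1
  _ = 3 := by rw [Set.encard_singleton]; norm_num

lemma encard_le_four (x y z w : α) : ({x,y,z,w} : Set α).encard ≤ 4 := by
  calc ({x,y,z,w} : Set α).encard ≤ ({y,z,w} : Set α).encard + 1 := Set.encard_insert_le _ _
  _ ≤ 3 + 1 := add_le_add_left (encard_le_three _ _ _) 1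
  _ = 4 := by norm_num

lemma encard4_pairwise {a b c d : α} (h : ({a,b,c,d} : Set α).encard = 4) :
    a ≠ b ∧ a ≠ c ∧ a ≠ d ∧ b ≠ c ∧ b ≠ d ∧ c ≠ d := by
  have h1 : a ∉ ({b,c,d} : Set α) := by
    intro hmem
    rw [Set.insert_eq_self.2 hmem] at h
    have := encard_le_three b c d
    rw [h] at this
    norm_num at this
  have h2 : b ∉ ({c,d} : Set α) := by
    intro hmem
    have heq : ({a,b,c,d} : Set α) = {a,c,d} := by
      rw [show ({b,c,d} : Set α) = insert b {c,d} from rfl, Set.insert_eq_self.2 hmem]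
    rw [heq] at h
    have := encard_le_three a c d
    rw [h] at this
    norm_num at this
  have h3 : c ≠ d := by
    rintro rfl
    have heq : ({a,b,c,c} : Set α) = {a,b,c} := by ext w; simp
    rw [heq] at h
    have := encard_le_three a b c
    rw [h] at this
    norm_num at this
  simp only [Set.mem_insert_iff, Set.mem_singleton_iff] at h1 h2
  push_neg at h1 h2
  exact ⟨h1.1, h1.2.1, h1.2.2, h2.1, h2.2, h3⟩

lemma encard5_pairwise {a b c d e : α} (h : ({a,b,c,d,e} : Set α).encard = 5) :
    a ≠ b ∧ a ≠ c ∧ a ≠ d ∧ a ≠ e ∧ b ≠ c ∧ b ≠ d ∧ b ≠ e ∧ c ≠ d ∧ c ≠ e ∧ d ≠ e := by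
  have h1 : a ∉ ({b,c,d,e} : Set α) := by
    intro hmem
    rw [Set.insert_eq_self.2 hmem] at h
    have := encard_le_four b c d e
    rw [h] at this
    norm_num at this
  have h2 : b ∉ ({c,d,e} : Set α) := by
    intro hmem
    have heq : ({a,b,c,d,e} : Set α) = {a,c,d,e} := by
      rw [show ({b,c,d,e} : Set α) = insert b {c,d,e} from rfl, Set.insert_eq_self.2 hmem]
    rw [heq] at h
    have := encard_le_four a c d e
    rw [h] at this
    norm_num at this
  have h3 : c ∉ ({d,e} : Set α) := by
    intro hmem
    have heq : ({a,b,c,d,e} : Set α) = {a,b,d,e} := by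
      rw [show ({c,d,e} : Set α) = insert c {d,e} from rfl, Set.insert_eq_self.2 hmem]
    rw [heq] at h
    have := encard_le_four a b d e
    rw [h] at this
    norm_num at this
  have h4 : d ≠ e := by
    rintro rfl
    have heq : ({a,b,c,d,d} : Set α) = {a,b,c,d} := by ext w; simp
    rw [heq] at h
    have := encard_le_four a b c d
    rw [h] at this
    norm_num at this
  simp only [Set.mem_insert_iff, Set.mem_singleton_iff] at h1 h2 h3
  push_neg at h1 h2 h3
  exact ⟨h1.1, h1.2.1, h1.2.2.1, h1.2.2.2, h2.1, h2.2.1, h2.2.2, h3.1, h3.2, h4⟩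

lemma encard_quad_of_ne {a b c d : α} (hab : a ≠ b) (hac : a ≠ c) (had : a ≠ d)
    (hbc : b ≠ c) (hbd : b ≠ d) (hcd : c ≠ d) : ({a,b,c,d} : Set α).encard = 4 := by
  rw [Set.encard_insert_of_notMem (by simp [hab, hac, had]),
    Set.encard_insert_of_notMem (by simp [hbc, hbd]), Set.encard_pair hcd]
  norm_num

lemma tri_pair_con (h : M.IsTriangle {x,y,z}) (hxy : x ≠ y) (hxz : x ≠ z)
    (hyz : y ≠ z) :
    (M.Con {x}).Dep {y,z} ∧ (M.Con {x}).Indep {y} ∧ (M.Con {x}).Indep {z} := by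
  have hdepT : M.Dep {x,y,z} := h.1.1
  have hsubE : ({x,y,z} : Set α) ⊆ M.E := hdepT.subset_ground
  have hyE : y ∈ M.E := hsubE (by simp)
  have hzE : z ∈ M.E := hsubE (by simp)
  have hx : M.Indep {x} := h.1.2 ((Set.ssubset_iff_of_subset (by simp)).2
    ⟨y, by simp, by simpa using Ne.symm hxy⟩)
  have hxy' : M.Indep {x,y} := h.1.2 ((Set.ssubset_iff_of_subset
    (by intro w hw; simp at hw ⊢; tauto)).2
    ⟨z, by simp, by simp; push_neg; exact ⟨Ne.symm hxz, Ne.symm hyz⟩⟩)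
  have hxz' : M.Indep {x,z} := h.1.2 ((Set.ssubset_iff_of_subset
    (by intro w hw; simp at hw ⊢; tauto)).2
    ⟨y, by simp, by simp; push_neg; exact ⟨Ne.symm hxy, hyz⟩⟩)
  refine ⟨?_, ?_, ?_⟩
  · refine Dep_con_of_dep_union hx
      (by intro w hw; simp at hw; rcases hw with rfl | rfl; exacts [hyE, hzE]) ?_ ?_
    · refine Set.disjoint_left.2 ?_
      rintro w (rfl | rfl) hws <;> simp at hws
      · exact hxy hws.symm
      · exact hxz hws.symm
    · rw [show ({y,z} ∪ {x} : Set α) = {x,y,z} from by ext w; simp_all]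
      exact hdepT.not_indep
  · refine Indep.con_of_indep_union hx ?_ (Set.disjoint_singleton.2 (Ne.symm hxy))
    rw [show ({y} ∪ {x} : Set α) = {x,y} from by rw [Set.union_comm, Set.singleton_union]]
    exact hxy'
  · refine Indep.con_of_indep_union hx ?_ (Set.disjoint_singleton.2 (Ne.symm hxz))
    rw [show ({z} ∪ {x} : Set α) = {x,z} from by rw [Set.union_comm, Set.singleton_union]]
    exact hxz'

/-- From an `N`-minor of `M / x` with `x` in a triangle `{x, y, z}`,
get `N`-minors of `M \ y` and `M \ z`. -/
lemma triangle_con_step (hNi4 : N.InternallyFourConnected) (hcard : (8:ℕ∞) ≤ N.E.encard)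
    (hT : M.IsTriangle {x,y,z}) (hxy : x ≠ y) (hxz : x ≠ z) (hyz : y ≠ z)
    (h : (M.Con {x}).HasIsoMinor N) :
    (M.Del {y}).HasIsoMinor N ∧ (M.Del {z}).HasIsoMinor N := by
  obtain ⟨hdep, hyI, hzI⟩ := tri_pair_con hT hxy hxz hyz
  have hPL := parallel_hasIsoMinor hNi4 hcard hdep hyI hzI h
  have hsubE : ({x,y,z} : Set α) ⊆ M.E := hT.dep.subset_ground
  have hxE : ({x} : Set α) ⊆ M.E := Set.singleton_subset_iff.2 (hsubE (by simp))
  have hyE : ({y} : Set α) ⊆ M.E := Set.singleton_subset_iff.2 (hsubE (by simp))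
  have hzE : ({z} : Set α) ⊆ M.E := Set.singleton_subset_iff.2 (hsubE (by simp))
  constructor
  · have h1 := hPL.1
    rw [Con_Del_comm hxE hyE (Set.disjoint_singleton.2 hxy)] at h1
    exact h1.of_isMinorOf (con_isMinorOf _ _)
  · have h1 := hPL.2
    rw [Con_Del_comm hxE hzE (Set.disjoint_singleton.2 hxz)] at h1
    exact h1.of_isMinorOf (con_isMinorOf _ _)

/-- From an `N`-minor of `M \ x` with `x` in a triad `{x, y, z}`,
get `N`-minors of `M / y` and `M / z`. -/
lemma triad_del_step (hNi4 : N.InternallyFourConnected) (hcard : (8:ℕ∞) ≤ N.E.encard)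
    (hT : M.IsTriad {x,y,z}) (hxy : x ≠ y) (hxz : x ≠ z) (hyz : y ≠ z)
    (h : (M.Del {x}).HasIsoMinor N) :
    (M.Con {y}).HasIsoMinor N ∧ (M.Con {z}).HasIsoMinor N := by
  obtain ⟨hdep, hyI, hzI⟩ := tri_pair_con (M := M✶) hT.dual_triangle hxy hxz hyz
  rw [← Del_dual] at hdep hyI hzI
  have hSL := series_hasIsoMinor hNi4 hcard hdep hyI hzI h
  have hsubE : ({x,y,z} : Set α) ⊆ M.E := by
    rw [← dual_ground]; exact hT.dual_triangle.dep.subset_ground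
  have hxE : ({x} : Set α) ⊆ M.E := Set.singleton_subset_iff.2 (hsubE (by simp))
  have hyE : ({y} : Set α) ⊆ M.E := Set.singleton_subset_iff.2 (hsubE (by simp))
  have hzE : ({z} : Set α) ⊆ M.E := Set.singleton_subset_iff.2 (hsubE (by simp))
  constructor
  · have h1 := hSL.1
    rw [← Con_Del_comm hyE hxE (Set.disjoint_singleton.2 (Ne.symm hxy))] at h1
    exact h1.of_isMinorOf (del_isMinorOf _ _)
  · have h1 := hSL.2
    rw [← Con_Del_comm hzE hxE (Set.disjoint_singleton.2 (Ne.symm hxz))] at h1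
    exact h1.of_isMinorOf (del_isMinorOf _ _)

end PartF
section PartG

variable {M : Matroid α} {N : Matroid β}

lemma fourfan (hNi4 : N.InternallyFourConnected) (hcard : (8:ℕ∞) ≤ N.E.encard)
    {s1 s2 s3 s4 : α} (hfan : M.Is4FanOrdering s1 s2 s3 s4) (h : M.HasIsoMinor N) :
    (M.Del {s1}).HasIsoMinor N ∨ (M.Con {s4}).HasIsoMinor N := by
  obtain ⟨hc4, hT, hTs⟩ := hfan
  obtain ⟨h12, h13, h14, h23, h24, h34⟩ := encard4_pairwise hc4
  obtain ⟨M₀, ⟨C, D, hdj, hC, hD, rfl⟩, hiso⟩ := h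
  have hT2 : M.IsTriangle {s2,s1,s3} := by
    rw [show ({s2,s1,s3} : Set α) = {s1,s2,s3} from by ext w; simp; tauto]; exact hT
  have hT3 : M.IsTriangle {s3,s1,s2} := by
    rw [show ({s3,s1,s2} : Set α) = {s1,s2,s3} from by ext w; simp; tauto]; exact hT
  have hTs3 : M.IsTriad {s3,s2,s4} := by
    rw [show ({s3,s2,s4} : Set α) = {s2,s3,s4} from by ext w; simp; tauto]; exact hTs
  have hTs4 : M.IsTriad {s4,s2,s3} := by
    rw [show ({s4,s2,s3} : Set α) = {s2,s3,s4} from by ext w; simp; tauto]; exact hTs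
  by_cases h1D : s1 ∈ D
  · exact Or.inl ⟨_, minor_del_of_mem hdj hC hD h1D, hiso⟩
  by_cases h4C : s4 ∈ C
  · exact Or.inr ⟨_, minor_con_of_mem hdj hC hD h4C, hiso⟩
  by_cases h1C : s1 ∈ C
  · have hcon1 : (M.Con {s1}).HasIsoMinor N := ⟨_, minor_con_of_mem hdj hC hD h1C, hiso⟩
    have hdel3 := (triangle_con_step hNi4 hcard hT h12 h13 h23 hcon1).2
    exact Or.inr (triad_del_step hNi4 hcard hTs3 h23.symm h34 h24 hdel3).2
  by_cases h4D : s4 ∈ D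
  · have hdel4 : (M.Del {s4}).HasIsoMinor N := ⟨_, minor_del_of_mem hdj hC hD h4D, hiso⟩
    have hcon2 := (triad_del_step hNi4 hcard hTs4 h24.symm h34.symm h23 hdel4).1
    exact Or.inl (triangle_con_step hNi4 hcard hT2 h12.symm h23 h13 hcon2).1
  by_cases h2C : s2 ∈ C
  · have hcon2 : (M.Con {s2}).HasIsoMinor N := ⟨_, minor_con_of_mem hdj hC hD h2C, hiso⟩
    exact Or.inl (triangle_con_step hNi4 hcard hT2 h12.symm h23 h13 hcon2).1
  by_cases h2D : s2 ∈ D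
  · have hdel2 : (M.Del {s2}).HasIsoMinor N := ⟨_, minor_del_of_mem hdj hC hD h2D, hiso⟩
    exact Or.inr (triad_del_step hNi4 hcard hTs h23 h24 h34 hdel2).2
  by_cases h3C : s3 ∈ C
  · have hcon3 : (M.Con {s3}).HasIsoMinor N := ⟨_, minor_con_of_mem hdj hC hD h3C, hiso⟩
    exact Or.inl (triangle_con_step hNi4 hcard hT3 h13.symm h23.symm h12 hcon3).1
  by_cases h3D : s3 ∈ D
  · have hdel3 : (M.Del {s3}).HasIsoMinor N := ⟨_, minor_del_of_mem hdj hC hD h3D, hiso⟩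
    exact Or.inr (triad_del_step hNi4 hcard hTs3 h23.symm h34 h24 hdel3).2
  · exfalso
    have hgroundT : ({s1,s2,s3} : Set α) ⊆ M.E := hT.dep.subset_ground
    have hgroundTs : ({s2,s3,s4} : Set α) ⊆ M.E := by
      rw [← dual_ground]; exact hTs.dual_triangle.dep.subset_ground
    have hYE : ({s1,s2,s3,s4} : Set α) ⊆ ((M.Con C).Del D).E := by
      rw [Del_ground, Con_ground]
      rintro w (rfl | rfl | rfl | rfl)
      · exact ⟨⟨hgroundT (by simp), h1C⟩, h1D⟩
      · exact ⟨⟨hgroundT (by simp), h2C⟩, h2D⟩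
      · exact ⟨⟨hgroundT (by simp), h3C⟩, h3D⟩
      · exact ⟨⟨hgroundTs (by simp), h4C⟩, h4D⟩
    have hdepT' : ((M.Con C).Del D).Dep {s1,s2,s3} :=
      dep_persist hT.dep
        (Set.disjoint_left.2 (by rintro w (rfl | rfl | rfl) <;> assumption))
        (Set.disjoint_left.2 (by rintro w (rfl | rfl | rfl) <;> assumption))
    have hdepY : ((M.Con C).Del D).Dep {s1,s2,s3,s4} :=
      hdepT'.superset (by intro w hw; simp at hw ⊢; tauto) hYE
    have hcodep : ((M.Con C).Del D)✶.Dep {s2,s3,s4} :=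
      codep_persist hTs.dual_triangle.dep
        (Set.disjoint_left.2 (by rintro w (rfl | rfl | rfl) <;> assumption))
        (Set.disjoint_left.2 (by rintro w (rfl | rfl | rfl) <;> assumption))
    exact hiso.quad_contra hNi4 hcard hYE hc4 hdepY
      (by intro w hw; simp at hw ⊢; tauto) hcodep

set_option maxHeartbeats 2000000 in
lemma fivefan (hNi4 : N.InternallyFourConnected) (hcard : (8:ℕ∞) ≤ N.E.encard)
    {s1 s2 s3 s4 s5 : α} (hfan : M.Is5FanOrdering s1 s2 s3 s4 s5) (h : M.HasIsoMinor N) :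
    ((M.Del {s1}).Del {s5}).HasIsoMinor N ∨
      (((M.Del {s1}).Con {s2}).HasIsoMinor N ∧ ((M.Con {s4}).Del {s5}).HasIsoMinor N) := by
  obtain ⟨hc5, hT1, hTs, hT2⟩ := hfan
  obtain ⟨h12, h13, h14, h15, h23, h24, h25, h34, h35, h45⟩ := encard5_pairwise hc5
  obtain ⟨M₀, ⟨C, D, hdj, hC, hD, rfl⟩, hiso⟩ := h
  have hgT1 : ({s1,s2,s3} : Set α) ⊆ M.E := hT1.dep.subset_ground
  have hgT2 : ({s3,s4,s5} : Set α) ⊆ M.E := hT2.dep.subset_ground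
  have hgTs : ({s2,s3,s4} : Set α) ⊆ M.E := by
    rw [← dual_ground]; exact hTs.dual_triangle.dep.subset_ground
  have h1E : s1 ∈ M.E := hgT1 (by simp)
  have h2E : s2 ∈ M.E := hgT1 (by simp)
  have h3E : s3 ∈ M.E := hgT1 (by simp)
  have h4E : s4 ∈ M.E := hgT2 (by simp)
  have h5E : s5 ∈ M.E := hgT2 (by simp)
  have hT1b : M.IsTriangle {s2,s1,s3} := by
    rw [show ({s2,s1,s3} : Set α) = {s1,s2,s3} from by ext w; simp; tauto]; exact hT1
  have hT1c : M.IsTriangle {s3,s1,s2} := by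
    rw [show ({s3,s1,s2} : Set α) = {s1,s2,s3} from by ext w; simp; tauto]; exact hT1
  have hT2b : M.IsTriangle {s4,s3,s5} := by
    rw [show ({s4,s3,s5} : Set α) = {s3,s4,s5} from by ext w; simp; tauto]; exact hT2
  have hT2c : M.IsTriangle {s5,s3,s4} := by
    rw [show ({s5,s3,s4} : Set α) = {s3,s4,s5} from by ext w; simp; tauto]; exact hT2
  have hTsb : M.IsTriad {s3,s2,s4} := by
    rw [show ({s3,s2,s4} : Set α) = {s2,s3,s4} from by ext w; simp; tauto]; exact hTs
  have hTsc : M.IsTriad {s4,s2,s3} := by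
    rw [show ({s4,s2,s3} : Set α) = {s2,s3,s4} from by ext w; simp; tauto]; exact hTs
  have hP1 : (M.Con {s2}).HasIsoMinor N → ((M.Del {s1}).Con {s2}).HasIsoMinor N := by
    intro h2
    obtain ⟨hdep, hI1, hI3⟩ := tri_pair_con hT1b h12.symm h23 h13
    have h' := (parallel_hasIsoMinor hNi4 hcard hdep hI1 hI3 h2).1
    rwa [Con_Del_comm (Set.singleton_subset_iff.2 h2E) (Set.singleton_subset_iff.2 h1E)
      (Set.disjoint_singleton.2 h12.symm)] at h'
  have hP2 : (M.Con {s4}).HasIsoMinor N → ((M.Con {s4}).Del {s5}).HasIsoMinor N := by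
    intro h4
    obtain ⟨hdep, hI3, hI5⟩ := tri_pair_con hT2b h34.symm h45 h35
    exact (parallel_hasIsoMinor hNi4 hcard hdep hI3 hI5 h4).2
  have tail3 : (M.Con {s3}).HasIsoMinor N → ((M.Del {s1}).Del {s5}).HasIsoMinor N := by
    intro h3
    obtain ⟨hdepA, hA1, hA2⟩ := tri_pair_con hT1c h13.symm h23.symm h12
    have hdel1 : ((M.Con {s3}).Del {s1}).HasIsoMinor N :=
      (parallel_hasIsoMinor hNi4 hcard hdepA hA1 hA2 h3).1
    obtain ⟨hdepB, hB4, hB5⟩ := tri_pair_con hT2 h34 h35 h45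
    have hdepB' : ((M.Con {s3}).Del {s1}).Dep {s4,s5} := hdepB.del
      (Set.disjoint_left.2 (by
        rintro w (rfl | rfl) hws <;> simp at hws
        · exact h14 hws.symm
        · exact h15 hws.symm))
    have hB4' : ((M.Con {s3}).Del {s1}).Indep {s4} :=
      hB4.del (Set.disjoint_singleton.2 (Ne.symm h14))
    have hB5' : ((M.Con {s3}).Del {s1}).Indep {s5} :=
      hB5.del (Set.disjoint_singleton.2 (Ne.symm h15))
    have h5 := (parallel_hasIsoMinor hNi4 hcard hdepB' hB4' hB5' hdel1).2
    have hsub15 : ({s1} ∪ {s5} : Set α) ⊆ M.E := by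
      intro w hw
      simp at hw
      rcases hw with h' | h' <;> subst h' <;> assumption
    have hdsj : Disjoint ({s3} : Set α) ({s1} ∪ {s5}) := by
      rw [Set.disjoint_union_right]
      exact ⟨Set.disjoint_singleton.2 h13.symm, Set.disjoint_singleton.2 h35⟩
    rw [Del_Del, Con_Del_comm (Set.singleton_subset_iff.2 h3E) hsub15 hdsj] at h5
    have h6 := h5.of_isMinorOf (con_isMinorOf _ _)
    rwa [← Del_Del] at h6
  have hdel3R : (M.Del {s3}).HasIsoMinor N →
      (M.Con {s2}).HasIsoMinor N ∧ (M.Con {s4}).HasIsoMinor N :=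
    fun hd => triad_del_step hNi4 hcard hTsb h23.symm h34 h24 hd
  by_cases h2D : s2 ∈ D
  · left
    have hdel2 : (M.Del {s2}).HasIsoMinor N := ⟨_, minor_del_of_mem hdj hC hD h2D, hiso⟩
    exact tail3 (triad_del_step hNi4 hcard hTs h23 h24 h34 hdel2).1
  by_cases h4D : s4 ∈ D
  · left
    have hdel4 : (M.Del {s4}).HasIsoMinor N := ⟨_, minor_del_of_mem hdj hC hD h4D, hiso⟩
    exact tail3 (triad_del_step hNi4 hcard hTsc h24.symm h34.symm h23 hdel4).2
  by_cases h3D : s3 ∈ D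
  · right
    have hdel3 : (M.Del {s3}).HasIsoMinor N := ⟨_, minor_del_of_mem hdj hC hD h3D, hiso⟩
    obtain ⟨hc2, hc4⟩ := hdel3R hdel3
    exact ⟨hP1 hc2, hP2 hc4⟩
  by_cases h3C : s3 ∈ C
  · exact Or.inl (tail3 ⟨_, minor_con_of_mem hdj hC hD h3C, hiso⟩)
  by_cases h2C : s2 ∈ C
  · right
    have hcon2 : (M.Con {s2}).HasIsoMinor N := ⟨_, minor_con_of_mem hdj hC hD h2C, hiso⟩
    have hdel3 := (triangle_con_step hNi4 hcard hT1b h12.symm h23 h13 hcon2).2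
    obtain ⟨-, hc4⟩ := hdel3R hdel3
    exact ⟨hP1 hcon2, hP2 hc4⟩
  by_cases h4C : s4 ∈ C
  · right
    have hcon4 : (M.Con {s4}).HasIsoMinor N := ⟨_, minor_con_of_mem hdj hC hD h4C, hiso⟩
    have hdel3 := (triangle_con_step hNi4 hcard hT2b h34.symm h45 h35 hcon4).1
    obtain ⟨hc2, -⟩ := hdel3R hdel3
    exact ⟨hP1 hc2, hP2 hcon4⟩
  by_cases h1C : s1 ∈ C
  · right
    have hcon1 : (M.Con {s1}).HasIsoMinor N := ⟨_, minor_con_of_mem hdj hC hD h1C, hiso⟩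
    have hdel3 := (triangle_con_step hNi4 hcard hT1 h12 h13 h23 hcon1).2
    obtain ⟨hc2, hc4⟩ := hdel3R hdel3
    exact ⟨hP1 hc2, hP2 hc4⟩
  by_cases h5C : s5 ∈ C
  · right
    have hcon5 : (M.Con {s5}).HasIsoMinor N := ⟨_, minor_con_of_mem hdj hC hD h5C, hiso⟩
    have hdel3 := (triangle_con_step hNi4 hcard hT2c h35.symm h45.symm h34 hcon5).1
    obtain ⟨hc2, hc4⟩ := hdel3R hdel3
    exact ⟨hP1 hc2, hP2 hc4⟩
  by_cases h1D : s1 ∈ D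
  · by_cases h5D : s5 ∈ D
    · left
      have h5D' : s5 ∈ D \ {s1} := ⟨h5D, by simpa using h15.symm⟩
      have hC1 : C ⊆ (M.Del {s1}).E := by
        rw [Del_ground, Set.subset_diff]
        exact ⟨hC, Set.disjoint_singleton_right.2 h1C⟩
      have hD1 : D \ {s1} ⊆ (M.Del {s1}).E := by
        rw [Del_ground]
        exact Set.diff_subset_diff_left hD
      have hdj1 : Disjoint C (D \ {s1}) := hdj.mono_right Set.diff_subset
      have hkey : (M.Con C).Del D
          = ((((M.Del {s1}).Del {s5}).Con C).Del ((D \ {s1}) \ {s5})) := by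
        rw [con_del_extract_del hC hD hdj h1D,
          con_del_extract_del (M := M.Del {s1}) hC1 hD1 hdj1 h5D']
      refine ⟨_, ⟨C, (D \ {s1}) \ {s5}, hdj1.mono_right Set.diff_subset, ?_, ?_, hkey⟩, hiso⟩
      · rw [Del_ground, Set.subset_diff]
        exact ⟨hC1, Set.disjoint_singleton_right.2 h5C⟩
      · rw [Del_ground]
        exact Set.diff_subset_diff_left hD1
    · exfalso
      have hYE : ({s2,s3,s4,s5} : Set α) ⊆ ((M.Con C).Del D).E := by
        rw [Del_ground, Con_ground]
        rintro w (rfl | rfl | rfl | rfl)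
        · exact ⟨⟨h2E, h2C⟩, h2D⟩
        · exact ⟨⟨h3E, h3C⟩, h3D⟩
        · exact ⟨⟨h4E, h4C⟩, h4D⟩
        · exact ⟨⟨h5E, h5C⟩, h5D⟩
      have hdepT2' : ((M.Con C).Del D).Dep {s3,s4,s5} :=
        dep_persist hT2.dep
          (Set.disjoint_left.2 (by rintro w (rfl | rfl | rfl) <;> assumption))
          (Set.disjoint_left.2 (by rintro w (rfl | rfl | rfl) <;> assumption))
      have hdepY : ((M.Con C).Del D).Dep {s2,s3,s4,s5} :=
        hdepT2'.superset (by intro w hw; simp at hw ⊢; tauto) hYE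
      have hcodep : ((M.Con C).Del D)✶.Dep {s2,s3,s4} :=
        codep_persist hTs.dual_triangle.dep
          (Set.disjoint_left.2 (by rintro w (rfl | rfl | rfl) <;> assumption))
          (Set.disjoint_left.2 (by rintro w (rfl | rfl | rfl) <;> assumption))
      exact hiso.quad_contra hNi4 hcard hYE
        (encard_quad_of_ne h23 h24 h25 h34 h35 h45) hdepY
        (by intro w hw; simp at hw ⊢; tauto) hcodep
  · exfalso
    have hYE : ({s1,s2,s3,s4} : Set α) ⊆ ((M.Con C).Del D).E := by
      rw [Del_ground, Con_ground]
      rintro w (rfl | rfl | rfl | rfl)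
      · exact ⟨⟨h1E, h1C⟩, h1D⟩
      · exact ⟨⟨h2E, h2C⟩, h2D⟩
      · exact ⟨⟨h3E, h3C⟩, h3D⟩
      · exact ⟨⟨h4E, h4C⟩, h4D⟩
    have hdepT1' : ((M.Con C).Del D).Dep {s1,s2,s3} :=
      dep_persist hT1.dep
        (Set.disjoint_left.2 (by rintro w (rfl | rfl | rfl) <;> assumption))
        (Set.disjoint_left.2 (by rintro w (rfl | rfl | rfl) <;> assumption))
    have hdepY : ((M.Con C).Del D).Dep {s1,s2,s3,s4} :=
      hdepT1'.superset (by intro w hw; simp at hw ⊢; tauto) hYE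
    have hcodep : ((M.Con C).Del D)✶.Dep {s2,s3,s4} :=
      codep_persist hTs.dual_triangle.dep
        (Set.disjoint_left.2 (by rintro w (rfl | rfl | rfl) <;> assumption))
        (Set.disjoint_left.2 (by rintro w (rfl | rfl | rfl) <;> assumption))
    exact hiso.quad_contra hNi4 hcard hYE
      (encard_quad_of_ne h12 h13 h14 h23 h24 h34) hdepY
      (by intro w hw; simp at hw ⊢; tauto) hcodep

end PartG







end Matroid

open Matroid

/-- minors of 4-fans and 5-fans. -/
theorem statement_3 {α : Type u} {β : Type v} (M : Matroid α) (N : Matroid β)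
    (hMbin : M.IsBinary) (hNi4 : N.InternallyFourConnected)
    (hNcard : (8 : ℕ∞) ≤ N.E.encard)
    (hminor : M.HasIsoMinor N) :
    (∀ s₁ s₂ s₃ s₄ : α, M.Is4FanOrdering s₁ s₂ s₃ s₄ →
        (M.Del {s₁}).HasIsoMinor N ∨ (M.Con {s₄}).HasIsoMinor N) ∧
    (∀ s₁ s₂ s₃ s₄ s₅ : α, M.Is5FanOrdering s₁ s₂ s₃ s₄ s₅ →
        (((M.Del {s₁}).Del {s₅}).HasIsoMinor N ∨
          (((M.Del {s₁}).Con {s₂}).HasIsoMinor N ∧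
            ((M.Con {s₄}).Del {s₅}).HasIsoMinor N)) ∧
        (M.Del {s₁}).HasIsoMinor N ∧ (M.Del {s₅}).HasIsoMinor N) := by
  constructor
  · intro s₁ s₂ s₃ s₄ hfan
    exact fourfan hNi4 hNcard hfan hminor
  · intro s₁ s₂ s₃ s₄ s₅ hfan
    have hA := fivefan hNi4 hNcard hfan hminor
    obtain ⟨hc5, hT1, hTs, hT2⟩ := hfan
    obtain ⟨h12, h13, h14, h15, h23, h24, h25, h34, h35, h45⟩ := encard5_pairwise hc5
    have h4E : s₄ ∈ M.E := hT2.dep.subset_ground (by simp)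
    have h5E : s₅ ∈ M.E := hT2.dep.subset_ground (by simp)
    refine ⟨hA, ?_, ?_⟩
    · rcases hA with h | h
      · exact h.of_isMinorOf (del_isMinorOf _ _)
      · exact h.1.of_isMinorOf (con_isMinorOf _ _)
    · rcases hA with h | h
      · rw [Del_Del, Set.union_comm, ← Del_Del] at h
        exact h.of_isMinorOf (del_isMinorOf _ _)
      · have h2 := h.2
        rw [Con_Del_comm (Set.singleton_subset_iff.2 h4E) (Set.singleton_subset_iff.2 h5E)
          (Set.disjoint_singleton.2 h45)] at h2
        exact h2.of_isMinorOf (con_isMinorOf _ _)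
end
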